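/- arXiv:1710.07566 — 6 statements merged into one kernel-verified Lean document; each statement's English description precedes it below -/
import Mathlib

section
/- Let p ∈ (1,∞), let 0 < r < 1 and let γ satisfy r/(2p) < γ < r/p. Then the function g is smooth on ℝ × (0,∞), for all nonnegative integers k₀, k₁ the iterated derivative X₀^{k₀} X₁^{k₁} g belongs to L^p(ρ), and yet g² does not belong to L^p(ρ), i.e. ∫₀^∞ ∫_ℝ |g(x,a)|^{2p} a^{-1} dx da = ∞. (This is the concrete content of the paper's counterexample showing that on the ax+b group the Sobolev space L^p_k is not an algebra under pointwise multiplication for any positive integer k.) -/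
open MeasureTheory Set

noncomputable section

/-- Left-invariant vector field `X₀` on the `ax+b` group: `(X₀ f)(x,a) = a ∂f/∂a (x,a)`. -/
def X0 (f : ℝ → ℝ → ℝ) : ℝ → ℝ → ℝ := fun x a => a * deriv (fun b => f x b) a

/-- Left-invariant vector field `X₁` on the `ax+b` group: `(X₁ f)(x,a) = a ∂f/∂x (x,a)`. -/
def X1 (f : ℝ → ℝ → ℝ) : ℝ → ℝ → ℝ := fun x a => a * deriv (fun y => f y a) x

/-- Membership in `L^p(ρ)` on the `ax+b` group, where `dρ(x,a) = a⁻¹ dx da` on `ℝ × (0,∞)`. -/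
def MemLpRho (p : ℝ) (f : ℝ → ℝ → ℝ) : Prop :=
  ∫⁻ a in Set.Ioi (0 : ℝ), ∫⁻ x : ℝ, ENNReal.ofReal (|f x a| ^ p / a) < ⊤

lemma one_le_coe_top : (1 : WithTop ℕ∞) ≤ ((⊤ : ℕ∞) : WithTop ℕ∞) := by
  exact_mod_cast (le_top : (1:ℕ∞) ≤ ⊤)

inductive Good (r s : ℝ) : (ℝ → ℝ → ℝ) → Prop where
  | elem (φ η : ℝ → ℝ) (hφ : ContDiff ℝ (⊤ : ℕ∞) φ) (hφc : HasCompactSupport φ)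
      (hη : ContDiff ℝ (⊤ : ℕ∞) η) (hηs : tsupport η ⊆ Set.Ioo (-1 : ℝ) 1) :
      Good r s (fun x a => φ (x * a ^ (-r)) * η a * a ^ s)
  | add {f h : ℝ → ℝ → ℝ} : Good r s f → Good r s h →
      Good r s (fun x a => f x a + h x a)
  | congr {f h : ℝ → ℝ → ℝ} : Good r s f → (∀ x a, 0 < a → f x a = h x a) →
      Good r s h

lemma Good.diff_a {r s : ℝ} {f : ℝ → ℝ → ℝ} (hf : Good r s f) :
    ∀ x a, 0 < a → DifferentiableAt ℝ (fun b => f x b) a := by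
  induction hf with
  | elem φ η hφ hφc hη hηs =>
    intro x a ha
    have h1 : DifferentiableAt ℝ (fun b : ℝ => b ^ (-r)) a :=
      Real.differentiableAt_rpow_const_of_ne _ ha.ne'
    have h2 : DifferentiableAt ℝ (fun b : ℝ => b ^ s) a :=
      Real.differentiableAt_rpow_const_of_ne _ ha.ne'
    exact ((((hφ.differentiable (by simp)).differentiableAt.comp a
      (h1.const_mul x)).mul (hη.differentiable (by simp)).differentiableAt).mul h2)
  | add hf hh ihf ihh =>
    intro x a ha
    exact (ihf x a ha).add (ihh x a ha)
  | congr hf hfh ih =>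
    rename_i f' h'
    intro x a ha
    have hev : (fun b => h' x b) =ᶠ[nhds a] (fun b => f' x b) := by
      filter_upwards [Ioi_mem_nhds ha] with b hb using (hfh x b hb).symm
    exact (Filter.EventuallyEq.differentiableAt_iff hev).mpr (ih x a ha)

lemma Good.diff_x {r s : ℝ} {f : ℝ → ℝ → ℝ} (hf : Good r s f) :
    ∀ x a, 0 < a → DifferentiableAt ℝ (fun y => f y a) x := by
  induction hf with
  | elem φ η hφ hφc hη hηs =>
    intro x a _
    exact (((hφ.differentiable (by simp)).differentiableAt.comp x
      ((differentiable_id.mul_const _) x)).mul_const _).mul_const _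
  | add hf hh ihf ihh =>
    intro x a ha
    exact (ihf x a ha).add (ihh x a ha)
  | congr hf hfh ih =>
    rename_i f' h'
    intro x a ha
    have : (fun y => h' y a) = (fun y => f' y a) := funext fun y => (hfh y a ha).symm
    rw [this]
    exact ih x a ha

lemma Good.x1 {r s : ℝ} {f : ℝ → ℝ → ℝ} (hf : Good r s f) :
    Good r (s + (1 - r)) (X1 f) := by
  induction hf with
  | elem φ η hφ hφc hη hηs =>
    have hφ' : ContDiff ℝ (⊤ : ℕ∞) (deriv φ) := by
      exact_mod_cast (contDiff_infty_iff_deriv.mp (by exact_mod_cast hφ)).2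
    refine Good.congr (Good.elem (deriv φ) η hφ' hφc.deriv hη hηs) ?_
    intro x a ha
    have hc : HasDerivAt (fun y : ℝ => y * a ^ (-r)) (a ^ (-r)) x := hasDerivAt_mul_const _
    have hφd : HasDerivAt φ (deriv φ (x * a ^ (-r))) (x * a ^ (-r)) :=
      ((hφ.differentiable (by simp)) _).hasDerivAt
    have hd : deriv (fun y => φ (y * a ^ (-r)) * η a * a ^ s) x
        = deriv φ (x * a ^ (-r)) * a ^ (-r) * η a * a ^ s :=
      (((hφd.comp x hc).mul_const (η a)).mul_const (a ^ s)).deriv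
    have key : a ^ (s + (1 - r)) = a * a ^ (-r) * a ^ s := by
      rw [Real.rpow_add ha, Real.rpow_sub ha, Real.rpow_one, Real.rpow_neg ha.le]
      have := (Real.rpow_pos_of_pos ha r).ne'
      field_simp
    show _ = a * deriv (fun y => φ (y * a ^ (-r)) * η a * a ^ s) x
    rw [hd, key]; ring
  | add hf hh ihf ihh =>
    rename_i f' h'
    refine Good.congr (ihf.add ihh) ?_
    intro x a ha
    show X1 f' x a + X1 h' x a = _
    have : deriv (fun y => f' y a + h' y a) x
        = deriv (fun y => f' y a) x + deriv (fun y => h' y a) x :=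
      deriv_add (hf.diff_x x a ha) (hh.diff_x x a ha)
    show _ = a * deriv (fun y => f' y a + h' y a) x
    rw [this]; unfold X1; ring
  | congr hf hfh ih =>
    rename_i f' h'
    refine Good.congr ih ?_
    intro x a ha
    show a * deriv (fun y => f' y a) x = a * deriv (fun y => h' y a) x
    have hfe : (fun y => f' y a) = (fun y => h' y a) := funext fun y => hfh y a ha
    rw [hfe]

lemma Good.x0 {r s : ℝ} {f : ℝ → ℝ → ℝ} (hf : Good r s f) :
    Good r s (X0 f) := by
  induction hf with
  | elem φ η hφ hφc hη hηs =>
    have hφ' : ContDiff ℝ (⊤ : ℕ∞) (deriv φ) := by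
      exact_mod_cast (contDiff_infty_iff_deriv.mp (by exact_mod_cast hφ)).2
    have hη' : ContDiff ℝ (⊤ : ℕ∞) (deriv η) := by
      exact_mod_cast (contDiff_infty_iff_deriv.mp (by exact_mod_cast hη)).2
    have hφ1 : ContDiff ℝ (⊤ : ℕ∞) (fun t => -r * t * deriv φ t) :=
      ((contDiff_const.mul contDiff_id).mul hφ')
    have hφ1c : HasCompactSupport (fun t => -r * t * deriv φ t) := by
      refine hφc.deriv.mono ?_
      intro t ht
      simp only [Function.mem_support] at ht ⊢
      intro h0; exact ht (by rw [h0]; ring)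
    have hη1 : ContDiff ℝ (⊤ : ℕ∞) (fun b => b * deriv η b) := contDiff_id.mul hη'
    have hsub : Function.support (fun b => b * deriv η b) ⊆ tsupport η := by
      intro b hb
      apply support_deriv_subset
      simp only [Function.mem_support] at hb ⊢
      intro h; exact hb (by rw [h]; ring)
    have hη1s : tsupport (fun b => b * deriv η b) ⊆ Set.Ioo (-1 : ℝ) 1 :=
      (closure_minimal hsub (isClosed_tsupport η)).trans hηs
    have hη2 : ContDiff ℝ (⊤ : ℕ∞) (fun b => s * η b) := contDiff_const.mul hη
    have hη2s : tsupport (fun b => s * η b) ⊆ Set.Ioo (-1 : ℝ) 1 := by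
      refine (closure_minimal ?_ (isClosed_tsupport η)).trans hηs
      intro b hb
      simp only [Function.mem_support] at hb
      apply subset_closure
      simp only [Function.mem_support]
      intro h; exact hb (by rw [h]; ring)
    refine Good.congr (((Good.elem _ η hφ1 hφ1c hη hηs).add
      (Good.elem φ _ hφ hφc hη1 hη1s)).add (Good.elem φ _ hφ hφc hη2 hη2s)) ?_
    intro x a ha
    have h1 : HasDerivAt (fun b : ℝ => b ^ (-r)) (-r * a ^ (-r - 1)) a :=
      Real.hasDerivAt_rpow_const (Or.inl ha.ne')
    have hφd : HasDerivAt φ (deriv φ (x * a ^ (-r))) (x * a ^ (-r)) :=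
      ((hφ.differentiable (by simp)) _).hasDerivAt
    have h2 : HasDerivAt (fun b => φ (x * b ^ (-r)))
        (deriv φ (x * a ^ (-r)) * (x * (-r * a ^ (-r - 1)))) a :=
      hφd.comp a (h1.const_mul x)
    have hηd : HasDerivAt η (deriv η a) a :=
      ((hη.differentiable (by simp)) _).hasDerivAt
    have h3 : HasDerivAt (fun b : ℝ => b ^ s) (s * a ^ (s - 1)) a :=
      Real.hasDerivAt_rpow_const (Or.inl ha.ne')
    have hd : deriv (fun b => φ (x * b ^ (-r)) * η b * b ^ s) a
        = (deriv φ (x * a ^ (-r)) * (x * (-r * a ^ (-r - 1))) * η a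
            + φ (x * a ^ (-r)) * deriv η a) * a ^ s
          + φ (x * a ^ (-r)) * η a * (s * a ^ (s - 1)) := ((h2.mul hηd).mul h3).deriv
    show _ = a * deriv (fun b => φ (x * b ^ (-r)) * η b * b ^ s) a
    rw [hd]
    have e1 : a ^ (-r - 1) = a ^ (-r) / a := by
      rw [Real.rpow_sub ha, Real.rpow_one]
    have e2 : a ^ (s - 1) = a ^ s / a := by
      rw [Real.rpow_sub ha, Real.rpow_one]
    rw [e1, e2]
    field_simp
  | add hf hh ihf ihh =>
    rename_i f' h'
    refine Good.congr (ihf.add ihh) ?_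
    intro x a ha
    show X0 f' x a + X0 h' x a = _
    have : deriv (fun b => f' x b + h' x b) a
        = deriv (fun b => f' x b) a + deriv (fun b => h' x b) a :=
      deriv_add (hf.diff_a x a ha) (hh.diff_a x a ha)
    show _ = a * deriv (fun b => f' x b + h' x b) a
    rw [this]; unfold X0; ring
  | congr hf hfh ih =>
    rename_i f' h'
    refine Good.congr ih ?_
    intro x a ha
    show a * deriv (fun b => f' x b) a = a * deriv (fun b => h' x b) a
    have hev : (fun b => f' x b) =ᶠ[nhds a] (fun b => h' x b) := by
      filter_upwards [Ioi_mem_nhds ha] with b hb using (hfh x b hb)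
    rw [hev.deriv_eq]

lemma Good.bound {r s : ℝ} {f : ℝ → ℝ → ℝ} (hf : Good r s f) :
    ∃ C A : ℝ, 0 ≤ C ∧ 0 < A ∧ ∀ x a : ℝ, 0 < a →
      (|f x a| ≤ C * a ^ s ∧ (A * a ^ r ≤ |x| → f x a = 0) ∧ (1 ≤ a → f x a = 0)) := by
  induction hf with
  | elem φ η hφ hφc hη hηs =>
    obtain ⟨Cφ, hCφ⟩ := hφc.exists_bound_of_continuous hφ.continuous
    have hηc : HasCompactSupport η :=
      IsCompact.of_isClosed_subset isCompact_Icc (isClosed_tsupport η)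
        (hηs.trans Ioo_subset_Icc_self)
    obtain ⟨Cη, hCη⟩ := hηc.exists_bound_of_continuous hη.continuous
    obtain ⟨B, hB⟩ := hφc.isBounded.subset_closedBall 0
    have hCφ0 : 0 ≤ Cφ := le_trans (norm_nonneg _) (hCφ 0)
    have hCη0 : 0 ≤ Cη := le_trans (norm_nonneg _) (hCη 0)
    refine ⟨Cφ * Cη, max B 0 + 1, mul_nonneg hCφ0 hCη0, by positivity, ?_⟩
    intro x a ha
    have har : (0:ℝ) < a ^ r := Real.rpow_pos_of_pos ha r
    have has : (0:ℝ) < a ^ s := Real.rpow_pos_of_pos ha s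
    refine ⟨?_, ?_, ?_⟩
    · have : |φ (x * a ^ (-r)) * η a * a ^ s| = |φ (x * a ^ (-r))| * |η a| * a ^ s := by
        rw [abs_mul, abs_mul, abs_of_pos has]
      rw [this]
      have b1 := hCφ (x * a ^ (-r))
      have b2 := hCη a
      rw [Real.norm_eq_abs] at b1 b2
      have : |φ (x * a ^ (-r))| * |η a| ≤ Cφ * Cη :=
        mul_le_mul b1 b2 (abs_nonneg _) hCφ0
      exact mul_le_mul_of_nonneg_right this has.le
    · intro hx
      have hnotin : x * a ^ (-r) ∉ tsupport φ := by
        intro hmem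
        have := hB hmem
        rw [Metric.mem_closedBall, Real.dist_eq, sub_zero] at this
        have h1 : (max B 0 + 1) * a ^ r * a ^ (-r) ≤ |x| * a ^ (-r) :=
          mul_le_mul_of_nonneg_right hx (Real.rpow_pos_of_pos ha (-r)).le
        have h2 : a ^ r * a ^ (-r) = 1 := by
          rw [← Real.rpow_add ha]; simp
        rw [mul_assoc, h2, mul_one] at h1
        have h3 : |x * a ^ (-r)| = |x| * a ^ (-r) := by
          rw [abs_mul, abs_of_pos (Real.rpow_pos_of_pos ha (-r))]
        have hle : max B 0 + 1 ≤ B := le_trans h1 (h3 ▸ this)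
        have := le_max_left B 0
        linarith
      show φ (x * a ^ (-r)) * η a * a ^ s = 0
      rw [image_eq_zero_of_notMem_tsupport hnotin]
      ring
    · intro h1a
      have : a ∉ tsupport η := fun hmem => absurd (hηs hmem).2 (not_lt.mpr h1a)
      show φ (x * a ^ (-r)) * η a * a ^ s = 0
      rw [image_eq_zero_of_notMem_tsupport this]
      ring
  | add hf hh ihf ihh =>
    rename_i f' h'
    obtain ⟨C1, A1, hC1, hA1, h1⟩ := ihf
    obtain ⟨C2, A2, hC2, hA2, h2⟩ := ihh
    refine ⟨C1 + C2, max A1 A2, by linarith, lt_max_of_lt_left hA1, ?_⟩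
    intro x a ha
    obtain ⟨b1, z1, o1⟩ := h1 x a ha
    obtain ⟨b2, z2, o2⟩ := h2 x a ha
    have har : (0:ℝ) < a ^ r := Real.rpow_pos_of_pos ha r
    refine ⟨?_, ?_, ?_⟩
    · calc |_| ≤ _ := abs_add_le _ _
        _ ≤ C1 * a ^ s + C2 * a ^ s := add_le_add b1 b2
        _ = (C1 + C2) * a ^ s := by ring
    · intro hx
      show f' x a + h' x a = 0
      rw [z1 (le_trans (mul_le_mul_of_nonneg_right (le_max_left A1 A2) har.le) hx),
        z2 (le_trans (mul_le_mul_of_nonneg_right (le_max_right A1 A2) har.le) hx)]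
      ring
    · intro h1a
      show f' x a + h' x a = 0
      rw [o1 h1a, o2 h1a]; ring
  | congr hf hfh ih =>
    obtain ⟨C, A, hC, hA, h⟩ := ih
    refine ⟨C, A, hC, hA, ?_⟩
    intro x a ha
    obtain ⟨b1, z1, o1⟩ := h x a ha
    rw [← hfh x a ha]
    exact ⟨b1, z1, o1⟩

lemma memLpRho_of_good {p r s : ℝ} (hp : 0 < p) (hpos : 0 < s * p + r)
    {f : ℝ → ℝ → ℝ} (hf : Good r s f) : MemLpRho p f := by
  obtain ⟨C, A, hC, hA, hb⟩ := hf.bound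
  have key1 : ∀ a : ℝ, (∫⁻ x : ℝ, ENNReal.ofReal (|f x a| ^ p / a)) ≤
      (Ioo (0:ℝ) 1).indicator
        (fun a => ENNReal.ofReal ((2 * A * C ^ p) * a ^ (s * p + r - 1))) a := by
    intro a
    by_cases ha : 0 < a
    · by_cases h1a : 1 ≤ a
      · have hz : ∀ x : ℝ, ENNReal.ofReal (|f x a| ^ p / a) = 0 := by
          intro x
          rw [(hb x a ha).2.2 h1a, abs_zero, Real.zero_rpow hp.ne', zero_div,
            ENNReal.ofReal_zero]
        rw [lintegral_congr hz, lintegral_zero]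
        exact zero_le
      · have hmem : a ∈ Ioo (0:ℝ) 1 := ⟨ha, lt_of_not_ge h1a⟩
        rw [indicator_of_mem hmem]
        calc (∫⁻ x : ℝ, ENNReal.ofReal (|f x a| ^ p / a))
            ≤ ∫⁻ x : ℝ, (Metric.closedBall (0:ℝ) (A * a ^ r)).indicator
                (fun _ => ENNReal.ofReal ((C * a ^ s) ^ p / a)) x := by
              apply lintegral_mono
              intro x
              by_cases hx : x ∈ Metric.closedBall (0:ℝ) (A * a ^ r)
              · rw [indicator_of_mem hx]
                apply ENNReal.ofReal_le_ofReal
                gcongr ?_ / a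
                exact Real.rpow_le_rpow (abs_nonneg _) (hb x a ha).1 hp.le
              · rw [indicator_of_notMem hx]
                rw [Metric.mem_closedBall, Real.dist_eq, sub_zero] at hx
                show ENNReal.ofReal (|f x a| ^ p / a) ≤ 0
                rw [(hb x a ha).2.1 (le_of_lt (lt_of_not_ge hx)), abs_zero,
                  Real.zero_rpow hp.ne', zero_div, ENNReal.ofReal_zero]
          _ = ENNReal.ofReal ((C * a ^ s) ^ p / a)
                * volume (Metric.closedBall (0:ℝ) (A * a ^ r)) := by
              rw [lintegral_indicator measurableSet_closedBall, setLIntegral_const]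
          _ = ENNReal.ofReal ((2 * A * C ^ p) * a ^ (s * p + r - 1)) := by
              rw [Real.volume_closedBall, ← ENNReal.ofReal_mul (by positivity)]
              congr 1
              have h1 : (C * a ^ s) ^ p = C ^ p * a ^ (s * p) := by
                rw [Real.mul_rpow hC (Real.rpow_nonneg ha.le _), ← Real.rpow_mul ha.le]
              have h2 : a ^ (s * p + r - 1) = a ^ (s * p) * a ^ r / a := by
                rw [Real.rpow_sub ha, Real.rpow_add ha, Real.rpow_one]
              rw [h1, h2]
              field_simp
    · have hz : ∀ x : ℝ, ENNReal.ofReal (|f x a| ^ p / a) = 0 := by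
        intro x
        rcases eq_or_lt_of_le (not_lt.mp ha) with h0 | h0
        · rw [h0, div_zero, ENNReal.ofReal_zero]
        · exact ENNReal.ofReal_eq_zero.mpr
            (div_nonpos_of_nonneg_of_nonpos (Real.rpow_nonneg (abs_nonneg _) p) (not_lt.mp ha))
      rw [lintegral_congr hz, lintegral_zero]
      exact zero_le
  unfold MemLpRho
  calc (∫⁻ a in Set.Ioi (0:ℝ), ∫⁻ x : ℝ, ENNReal.ofReal (|f x a| ^ p / a))
      ≤ ∫⁻ a in Set.Ioi (0:ℝ), (Ioo (0:ℝ) 1).indicator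
          (fun a => ENNReal.ofReal ((2 * A * C ^ p) * a ^ (s * p + r - 1))) a :=
        lintegral_mono key1
    _ = ∫⁻ a in Ioo (0:ℝ) 1,
          ENNReal.ofReal ((2 * A * C ^ p) * a ^ (s * p + r - 1)) ∂(volume.restrict (Ioi 0)) :=
        lintegral_indicator measurableSet_Ioo _
    _ = ∫⁻ a in Ioo (0:ℝ) 1, ENNReal.ofReal ((2 * A * C ^ p) * a ^ (s * p + r - 1)) := by
        rw [Measure.restrict_restrict measurableSet_Ioo,
          inter_eq_self_of_subset_left Ioo_subset_Ioi_self]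
    _ < ⊤ := by
        have hint : IntegrableOn (fun a : ℝ => a ^ (s * p + r - 1)) (Ioo (0:ℝ) 1) :=
          (intervalIntegral.integrableOn_Ioo_rpow_iff zero_lt_one).mpr (by linarith)
        exact (hint.const_mul (2 * A * C ^ p)).lintegral_lt_top

lemma lint_rpow_top (c e k : ℝ) (hc : 0 < c) (he : e ≤ -1) (hk : 0 < k) :
    ∫⁻ a in Ioo (0:ℝ) c, ENNReal.ofReal (k * a ^ e) = ⊤ := by
  by_contra h
  have hlt : ∫⁻ a in Ioo (0:ℝ) c, ENNReal.ofReal (k * a ^ e) < ⊤ := Ne.lt_top h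
  have hmeas : AEStronglyMeasurable (fun a : ℝ => k * a ^ e) (volume.restrict (Ioo 0 c)) := by
    refine ContinuousOn.aestronglyMeasurable ?_ measurableSet_Ioo
    exact continuousOn_const.mul (continuousOn_id.rpow_const fun x hx => Or.inl hx.1.ne')
  have hint : IntegrableOn (fun a : ℝ => k * a ^ e) (Ioo 0 c) := by
    refine ⟨hmeas, ?_⟩
    rw [hasFiniteIntegral_iff_norm, setLIntegral_congr_fun measurableSet_Ioo
      (fun a (ha : a ∈ Ioo (0:ℝ) c) => by
        rw [Real.norm_eq_abs, abs_of_nonneg (mul_nonneg hk.le (Real.rpow_nonneg ha.1.le e))])]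
    exact hlt
  have h2 : IntegrableOn (fun a : ℝ => a ^ e) (Ioo 0 c) := by
    have heq : ∀ a : ℝ, k * a ^ e * k⁻¹ = a ^ e := fun a => by field_simp
    exact (hint.mul_const k⁻¹).congr (ae_of_all _ fun a => heq a)
  have := (intervalIntegral.integrableOn_Ioo_rpow_iff hc).mp h2
  linarith


theorem sobolev_not_algebra_axb
    (p r γ : ℝ) (hp1 : 1 < p) (hr0 : 0 < r) (hr1 : r < 1)
    (hγ1 : r / (2 * p) < γ) (hγ2 : γ < r / p)
    (ψ χ : ℝ → ℝ)
    (hψ : ContDiff ℝ (⊤ : ℕ∞) ψ) (hψ0 : ∀ t, 0 ≤ ψ t)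
    (hψsupp : tsupport ψ ⊆ Set.Ioo 0 1)
    (hψ1 : ∀ t ∈ Set.Icc (1/4 : ℝ) (3/4), ψ t = 1)
    (hχ : ContDiff ℝ (⊤ : ℕ∞) χ) (hχ0 : ∀ t, 0 ≤ χ t)
    (hχsupp : tsupport χ ⊆ Set.Ioo (-1 : ℝ) 1)
    (hχ1 : ∀ t ∈ Set.Icc (0 : ℝ) (1/2), χ t = 1)
    (g : ℝ → ℝ → ℝ)
    (hg : ∀ x a, g x a = ψ (x * a ^ (-r)) * χ a * a ^ (-γ)) :
    ContDiffOn ℝ (⊤ : ℕ∞) (fun q : ℝ × ℝ => g q.1 q.2) (Set.univ ×ˢ Set.Ioi 0) ∧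
    (∀ k₀ k₁ : ℕ, MemLpRho p (X0^[k₀] (X1^[k₁] g))) ∧
    (∫⁻ a in Set.Ioi (0 : ℝ), ∫⁻ x : ℝ,
        ENNReal.ofReal (|g x a| ^ (2 * p) / a)) = ⊤ := by
  have hp0 : (0:ℝ) < p := lt_trans one_pos hp1
  refine ⟨?_, ?_, ?_⟩
  · -- smoothness
    intro q hq
    have hq2 : (0:ℝ) < q.2 := (mem_prod.mp hq).2
    apply ContDiffAt.contDiffWithinAt
    have h2 : ContDiffAt ℝ ((⊤:ℕ∞) : WithTop ℕ∞) (fun q : ℝ×ℝ => q.2 ^ (-r)) q :=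
      (Real.contDiffAt_rpow_const_of_ne hq2.ne').comp q contDiffAt_snd
    have h3 : ContDiffAt ℝ ((⊤:ℕ∞) : WithTop ℕ∞) (fun q : ℝ×ℝ => q.2 ^ (-γ)) q :=
      (Real.contDiffAt_rpow_const_of_ne hq2.ne').comp q contDiffAt_snd
    have h4 : ContDiffAt ℝ ((⊤:ℕ∞) : WithTop ℕ∞) (fun q : ℝ×ℝ => ψ (q.1 * q.2 ^ (-r))) q :=
      hψ.contDiffAt.comp q (contDiffAt_fst.mul h2)
    have h5 : ContDiffAt ℝ ((⊤:ℕ∞) : WithTop ℕ∞) (fun q : ℝ×ℝ => χ q.2) q :=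
      hχ.contDiffAt.comp q contDiffAt_snd
    exact ((h4.mul h5).mul h3).congr_of_eventuallyEq
      (Filter.Eventually.of_forall fun q' => hg q'.1 q'.2)
  · -- all derivatives in L^p
    have hψc : HasCompactSupport ψ :=
      IsCompact.of_isClosed_subset isCompact_Icc (isClosed_tsupport ψ)
        (hψsupp.trans Ioo_subset_Icc_self)
    have hgood : Good r (-γ) g :=
      Good.congr (Good.elem ψ χ hψ hψc hχ hχsupp) (fun x a _ => (hg x a).symm)
    intro k₀ k₁
    have h1 : ∀ k : ℕ, Good r (-γ + k * (1 - r)) (X1^[k] g) := by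
      intro k
      induction k with
      | zero => simpa using hgood
      | succ n ih =>
        rw [Function.iterate_succ_apply']
        have he : -γ + ((n:ℝ) + 1) * (1 - r) = (-γ + n * (1 - r)) + (1 - r) := by ring
        rw [show ((n+1 : ℕ) : ℝ) = (n:ℝ) + 1 by push_cast; ring, he]
        exact ih.x1
    have h2 : Good r (-γ + k₁ * (1 - r)) (X0^[k₀] (X1^[k₁] g)) := by
      induction k₀ with
      | zero => simpa using h1 k₁
      | succ n ih =>
        rw [Function.iterate_succ_apply']
        exact ih.x0
    apply memLpRho_of_good hp0 _ h2
    have hγp : γ * p < r := (lt_div_iff₀ hp0).mp hγ2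
    have hk : (0:ℝ) ≤ (k₁:ℝ) * (1 - r) := mul_nonneg (Nat.cast_nonneg _) (by linarith)
    nlinarith [mul_nonneg hk hp0.le]
  · -- divergence of g²
    have he : -γ * (2 * p) + r - 1 ≤ -1 := by
      have : r < γ * (2 * p) := (div_lt_iff₀ (by positivity)).mp hγ1
      linarith
    have key : ∀ a : ℝ,
        (Ioo (0:ℝ) (1/2)).indicator
          (fun a => ENNReal.ofReal ((1/2) * a ^ (-γ * (2 * p) + r - 1))) a ≤
        ∫⁻ x : ℝ, ENNReal.ofReal (|g x a| ^ (2 * p) / a) := by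
      intro a
      by_cases hmem : a ∈ Ioo (0:ℝ) (1/2)
      swap
      · rw [indicator_of_notMem hmem]; exact zero_le
      rw [indicator_of_mem hmem]
      obtain ⟨ha, ha2⟩ := hmem
      have har : (0:ℝ) < a ^ r := Real.rpow_pos_of_pos ha r
      have hmul : a ^ r * a ^ (-r) = 1 := by
        rw [← Real.rpow_add ha]; simp
      have hval : ∀ x ∈ Icc ((1/4) * a ^ r) ((3/4) * a ^ r),
          ENNReal.ofReal (|g x a| ^ (2 * p) / a)
            = ENNReal.ofReal (a ^ (-γ * (2 * p)) / a) := by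
        intro x hx
        have hxval : x * a ^ (-r) ∈ Icc (1/4 : ℝ) (3/4) := by
          constructor
          · have := mul_le_mul_of_nonneg_right hx.1 (Real.rpow_pos_of_pos ha (-r)).le
            rwa [mul_assoc, hmul, mul_one] at this
          · have := mul_le_mul_of_nonneg_right hx.2 (Real.rpow_pos_of_pos ha (-r)).le
            rwa [mul_assoc, hmul, mul_one] at this
        rw [hg x a, hψ1 _ hxval, hχ1 a ⟨ha.le, by linarith⟩, one_mul, one_mul,
          abs_of_pos (Real.rpow_pos_of_pos ha _), ← Real.rpow_mul ha.le]
      calc ENNReal.ofReal ((1/2) * a ^ (-γ * (2 * p) + r - 1))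
          = ENNReal.ofReal (a ^ (-γ * (2 * p)) / a)
              * volume (Icc ((1/4) * a ^ r) ((3/4) * a ^ r)) := by
            rw [Real.volume_Icc, ← ENNReal.ofReal_mul (by positivity)]
            congr 1
            have h2 : a ^ (-γ * (2 * p) + r - 1)
                = a ^ (-γ * (2 * p)) * a ^ r / a := by
              rw [Real.rpow_sub ha, Real.rpow_add ha, Real.rpow_one]
            rw [h2]; field_simp; ring
        _ = ∫⁻ x in Icc ((1/4) * a ^ r) ((3/4) * a ^ r),
              ENNReal.ofReal (a ^ (-γ * (2 * p)) / a) := (setLIntegral_const _ _).symm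
        _ = ∫⁻ x in Icc ((1/4) * a ^ r) ((3/4) * a ^ r),
              ENNReal.ofReal (|g x a| ^ (2 * p) / a) :=
            (setLIntegral_congr_fun measurableSet_Icc
              (fun x hx => (hval x hx))).symm
        _ ≤ ∫⁻ x : ℝ, ENNReal.ofReal (|g x a| ^ (2 * p) / a) :=
            setLIntegral_le_lintegral _ _
    rw [eq_top_iff]
    calc (⊤ : ENNReal)
        = ∫⁻ a in Ioo (0:ℝ) (1/2), ENNReal.ofReal ((1/2) * a ^ (-γ * (2 * p) + r - 1)) :=
          (lint_rpow_top _ _ _ (by norm_num) he (by norm_num)).symm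
      _ = ∫⁻ a in Ioo (0:ℝ) (1/2),
            ENNReal.ofReal ((1/2) * a ^ (-γ * (2 * p) + r - 1)) ∂(volume.restrict (Ioi 0)) := by
          rw [Measure.restrict_restrict measurableSet_Ioo,
            inter_eq_self_of_subset_left Ioo_subset_Ioi_self]
      _ = ∫⁻ a in Set.Ioi (0:ℝ), (Ioo (0:ℝ) (1/2)).indicator
            (fun a => ENNReal.ofReal ((1/2) * a ^ (-γ * (2 * p) + r - 1))) a :=
          (lintegral_indicator measurableSet_Ioo _).symm
      _ ≤ ∫⁻ a in Set.Ioi (0:ℝ), ∫⁻ x : ℝ, ENNReal.ofReal (|g x a| ^ (2 * p) / a) :=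
          lintegral_mono key
end
end

section
/- For every r, γ > 0 and all nonnegative integers k₀, k₁ there exist a function ψ̃ ∈ C_c^∞(ℝ) supported in (0,1) and a function Ψ̃, smooth on ℝ × (0,∞) with compact support contained in ℝ × (0,∞), such that for all (x,a) ∈ ℝ × (0,∞): (X₀^{k₀} X₁^{k₁} g)(x,a) = ψ̃(x a^{-r}) χ(a) a^{k₁(1-r)-γ} + Ψ̃(x,a). -/
open MeasureTheory Set

noncomputable section

namespace AxBAux

def Good (Ψ : ℝ → ℝ → ℝ) : Prop :=
  ContDiff ℝ (⊤ : ℕ∞) (fun q : ℝ × ℝ => Ψ q.1 q.2) ∧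
  IsCompact (tsupport (fun q : ℝ × ℝ => Ψ q.1 q.2)) ∧
  tsupport (fun q : ℝ × ℝ => Ψ q.1 q.2) ⊆ Set.univ ×ˢ Set.Ioi 0

lemma good_zero : Good (fun _ _ => (0 : ℝ)) := by
  refine ⟨contDiff_const, ?_, ?_⟩ <;>
  · rw [show tsupport (fun q : ℝ × ℝ => (0:ℝ)) = ∅ by
      simp [tsupport, Function.support]]
    simp [isCompact_empty]

lemma good_add {Ψ₁ Ψ₂ : ℝ → ℝ → ℝ} (h1 : Good Ψ₁) (h2 : Good Ψ₂) :
    Good (fun x a => Ψ₁ x a + Ψ₂ x a) := by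
  obtain ⟨c1, k1, s1⟩ := h1
  obtain ⟨c2, k2, s2⟩ := h2
  have hsub : tsupport (fun q : ℝ × ℝ => Ψ₁ q.1 q.2 + Ψ₂ q.1 q.2) ⊆
      tsupport (fun q : ℝ × ℝ => Ψ₁ q.1 q.2) ∪ tsupport (fun q : ℝ × ℝ => Ψ₂ q.1 q.2) :=
    tsupport_add _ _
  refine ⟨c1.add c2, ?_, ?_⟩
  · exact (k1.union k2).of_isClosed_subset (isClosed_tsupport _) hsub
  · exact hsub.trans (union_subset s1 s2)

lemma hasDerivAt_snd {Ψ : ℝ → ℝ → ℝ}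
    (hΨ : ContDiff ℝ (⊤ : ℕ∞) (fun q : ℝ × ℝ => Ψ q.1 q.2)) (x a : ℝ) :
    HasDerivAt (fun b => Ψ x b)
      ((fderiv ℝ (fun q : ℝ × ℝ => Ψ q.1 q.2) (x, a)) (0, 1)) a := by
  have h := (hΨ.differentiable (by simp) (x, a)).hasFDerivAt
  have hc : HasDerivAt (fun b : ℝ => ((x, b) : ℝ × ℝ)) (((0 : ℝ), (1 : ℝ)) : ℝ × ℝ) a :=
    (hasDerivAt_const a x).prodMk (hasDerivAt_id a)
  exact h.comp_hasDerivAt a hc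

/-- X0 applied to a Good function, in explicit fderiv form. -/
def D2 (Ψ : ℝ → ℝ → ℝ) : ℝ → ℝ → ℝ :=
  fun x a => a * (fderiv ℝ (fun q : ℝ × ℝ => Ψ q.1 q.2) (x, a)) (0, 1)

lemma good_D2 {Ψ : ℝ → ℝ → ℝ} (h : Good Ψ) : Good (D2 Ψ) := by
  obtain ⟨c, k, s⟩ := h
  have hderiv : ContDiff ℝ (⊤ : ℕ∞) (fun q : ℝ × ℝ =>
      (fderiv ℝ (fun q : ℝ × ℝ => Ψ q.1 q.2) q) (0, 1)) := by
    have := (c.fderiv_right (m := (⊤ : ℕ∞)) (by exact_mod_cast le_top))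
    exact this.clm_apply contDiff_const
  have hc : ContDiff ℝ (⊤ : ℕ∞) (fun q : ℝ × ℝ => D2 Ψ q.1 q.2) :=
    (contDiff_snd).mul hderiv
  have hsub : Function.support (fun q : ℝ × ℝ => D2 Ψ q.1 q.2) ⊆
      tsupport (fun q : ℝ × ℝ => Ψ q.1 q.2) := by
    intro q hq
    by_contra hmem
    apply hq
    have h0 : (fun q : ℝ × ℝ => Ψ q.1 q.2) =ᶠ[nhds q] (fun _ => 0) := by
      have : IsOpen (tsupport (fun q : ℝ × ℝ => Ψ q.1 q.2))ᶜ := (isClosed_tsupport _).isOpen_compl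
      filter_upwards [this.mem_nhds hmem] with p hp
      show (fun q : ℝ × ℝ => Ψ q.1 q.2) p = 0
      exact image_eq_zero_of_notMem_tsupport (f := fun q : ℝ × ℝ => Ψ q.1 q.2) hp
    have : fderiv ℝ (fun q : ℝ × ℝ => Ψ q.1 q.2) q = 0 := by
      rw [h0.fderiv_eq, fderiv_fun_const]; rfl
    simp [D2, this]
  have hts : tsupport (fun q : ℝ × ℝ => D2 Ψ q.1 q.2) ⊆
      tsupport (fun q : ℝ × ℝ => Ψ q.1 q.2) :=
    closure_minimal hsub (isClosed_tsupport _)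
  exact ⟨hc, k.of_isClosed_subset (isClosed_tsupport _) hts, hts.trans s⟩


def θ : ℝ → ℝ := fun a => Real.smoothTransition (8 * a - 1)

lemma θ_smooth : ContDiff ℝ (⊤ : ℕ∞) θ :=
  Real.smoothTransition.contDiff.comp (by fun_prop)

lemma θ_zero {a : ℝ} (ha : a ≤ 1/8) : θ a = 0 :=
  Real.smoothTransition.zero_of_nonpos (by linarith)

lemma θ_one {a : ℝ} (ha : 1/4 ≤ a) : θ a = 1 :=
  Real.smoothTransition.one_of_one_le (by linarith)

lemma θ_pos_of_ne {a : ℝ} (ha : θ a ≠ 0) : 1/8 < a := by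
  by_contra h
  exact ha (θ_zero (by linarith))

lemma deriv_χ_zero {χ : ℝ → ℝ} (hχ1 : ∀ t ∈ Set.Icc (0 : ℝ) (1/2), χ t = 1) {a : ℝ} (ha : a ∈ Ioo (0:ℝ) (1/2)) : deriv χ a = 0 := by
  have h : χ =ᶠ[nhds a] (fun _ => 1) := by
    filter_upwards [isOpen_Ioo.mem_nhds ha] with b hb
    exact hχ1 b (Ioo_subset_Icc_self hb)
  rw [h.deriv_eq, deriv_const]

lemma deriv_χ_theta {χ : ℝ → ℝ} (hχ1 : ∀ t ∈ Set.Icc (0 : ℝ) (1/2), χ t = 1) {a : ℝ} (ha : 0 < a) : deriv χ a * θ a = deriv χ a := by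
  rcases le_or_gt (1/4 : ℝ) a with h | h
  · rw [θ_one h, mul_one]
  · rw [deriv_χ_zero hχ1 ⟨ha, by linarith⟩, zero_mul]


/-- The remainder term produced by one application of X0 to the main part. -/
def R (r : ℝ) (χ φ : ℝ → ℝ) (β : ℝ) : ℝ → ℝ → ℝ :=
  fun x a => φ (x * a ^ (-r)) * (deriv χ a * θ a) * a ^ (β + 1)

lemma good_R (r : ℝ) (hr : 0 < r) {χ : ℝ → ℝ} (hχ : ContDiff ℝ (⊤ : ℕ∞) χ)
    (hχsupp : tsupport χ ⊆ Set.Ioo (-1 : ℝ) 1)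
    {φ : ℝ → ℝ} (hφ : ContDiff ℝ (⊤ : ℕ∞) φ) (hφsupp : tsupport φ ⊆ Set.Ioo 0 1)
    (β : ℝ) : Good (R r χ φ β) := by
  have hχ' : ContDiff ℝ (⊤ : ℕ∞) (deriv χ) := by
    have := (contDiff_infty_iff_deriv.1 (by exact_mod_cast hχ)).2
    exact_mod_cast this
  -- smoothness
  have hsm : ContDiff ℝ (⊤ : ℕ∞) (fun q : ℝ × ℝ => R r χ φ β q.1 q.2) := by
    rw [contDiff_iff_contDiffAt]
    intro q
    rcases lt_or_ge 0 q.2 with hq | hq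
    · have hopen : IsOpen {p : ℝ × ℝ | 0 < p.2} := isOpen_lt continuous_const continuous_snd
      have : ContDiffOn ℝ (⊤ : ℕ∞) (fun q : ℝ × ℝ => R r χ φ β q.1 q.2) {p : ℝ × ℝ | 0 < p.2} := by
        apply ContDiffOn.mul
        apply ContDiffOn.mul
        · apply hφ.comp_contDiffOn
          apply ContDiffOn.mul (contDiffOn_fst)
          exact ContDiffOn.rpow_const_of_ne (contDiffOn_snd) (fun p hp => ne_of_gt hp)
        · exact ((hχ'.comp contDiff_snd).mul (θ_smooth.comp contDiff_snd)).contDiffOn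
        · exact ContDiffOn.rpow_const_of_ne (contDiffOn_snd) (fun p hp => ne_of_gt hp)
      exact this.contDiffAt (hopen.mem_nhds hq)
    · have hopen : IsOpen {p : ℝ × ℝ | p.2 < 1/8} := isOpen_lt continuous_snd continuous_const
      have hev : (fun q : ℝ × ℝ => R r χ φ β q.1 q.2) =ᶠ[nhds q] (fun _ => 0) := by
        filter_upwards [hopen.mem_nhds (show q.2 < 1/8 by linarith)] with p hp
        simp [R, θ_zero (le_of_lt hp)]
      exact (contDiffAt_const (c := (0:ℝ))).congr_of_eventuallyEq hev
  -- support
  have hsub : Function.support (fun q : ℝ × ℝ => R r χ φ β q.1 q.2) ⊆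
      Set.Icc (0:ℝ) 1 ×ˢ Set.Icc (1/8 : ℝ) 1 := by
    intro q hq
    simp only [Function.mem_support, R] at hq
    have h1 : φ (q.1 * q.2 ^ (-r)) ≠ 0 := fun h => hq (by simp [h])
    have h2 : deriv χ q.2 ≠ 0 := fun h => hq (by simp [h])
    have h3 : θ q.2 ≠ 0 := fun h => hq (by simp [h])
    have ha8 : 1/8 < q.2 := θ_pos_of_ne h3
    have ha0 : (0:ℝ) < q.2 := by linarith
    have ha1 : q.2 < 1 := (hχsupp (support_deriv_subset (Function.mem_support.2 h2))).2
    have hu : q.1 * q.2 ^ (-r) ∈ Set.Ioo (0:ℝ) 1 :=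
      hφsupp (subset_tsupport _ (Function.mem_support.2 h1))
    have hrp : (0:ℝ) < q.2 ^ (-r) := Real.rpow_pos_of_pos ha0 _
    constructor
    · constructor
      · nlinarith [hu.1]
      · -- q.1 < q.2 ^ r ≤ 1
        have : q.1 * q.2 ^ (-r) < 1 := hu.2
        have hinv : q.2 ^ (-r) = (q.2 ^ r)⁻¹ := by
          rw [Real.rpow_neg (le_of_lt ha0)]
        have hrpos : (0:ℝ) < q.2 ^ r := Real.rpow_pos_of_pos ha0 _
        have hq1 : q.1 < q.2 ^ r := by
          rw [hinv] at this
          calc q.1 = q.1 * (q.2 ^ r)⁻¹ * q.2 ^ r := by field_simp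
          _ < 1 * q.2 ^ r := by exact mul_lt_mul_of_pos_right this hrpos
          _ = q.2 ^ r := one_mul _
        have : q.2 ^ r ≤ 1 := le_of_lt (Real.rpow_lt_one (le_of_lt ha0) ha1 hr)
        linarith
    · exact ⟨le_of_lt ha8, le_of_lt ha1⟩
  have hts : tsupport (fun q : ℝ × ℝ => R r χ φ β q.1 q.2) ⊆
      Set.Icc (0:ℝ) 1 ×ˢ Set.Icc (1/8 : ℝ) 1 :=
    closure_minimal hsub ((isClosed_Icc).prod isClosed_Icc)
  refine ⟨hsm, ?_, ?_⟩
  · exact ((isCompact_Icc).prod isCompact_Icc).of_isClosed_subset (isClosed_tsupport _) hts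
  · exact hts.trans (by
      intro p hp
      exact ⟨trivial, lt_of_lt_of_le (by norm_num) hp.2.1⟩)


lemma hasDerivAt_main (r : ℝ) {φ χ : ℝ → ℝ} (hφ : ContDiff ℝ (⊤ : ℕ∞) φ)
    (hχ : ContDiff ℝ (⊤ : ℕ∞) χ) (β x a : ℝ) (ha : 0 < a) :
    HasDerivAt (fun b => φ (x * b ^ (-r)) * χ b * b ^ β)
      (deriv φ (x * a ^ (-r)) * (x * (-r * a ^ (-r - 1))) * χ a * a ^ β
        + φ (x * a ^ (-r)) * deriv χ a * a ^ β
        + φ (x * a ^ (-r)) * χ a * (β * a ^ (β - 1))) a := by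
  have h1 : HasDerivAt (fun b : ℝ => b ^ (-r)) (-r * a ^ (-r - 1)) a :=
    Real.hasDerivAt_rpow_const (Or.inl (ne_of_gt ha))
  have h2 : HasDerivAt (fun b : ℝ => x * b ^ (-r)) (x * (-r * a ^ (-r - 1))) a := h1.const_mul x
  have hφ' : HasDerivAt φ (deriv φ (x * a ^ (-r))) (x * a ^ (-r)) :=
    ((hφ.differentiable (by simp)) _).hasDerivAt
  have h3 : HasDerivAt (fun b : ℝ => φ (x * b ^ (-r)))
      (deriv φ (x * a ^ (-r)) * (x * (-r * a ^ (-r - 1)))) a := hφ'.comp a h2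
  have h4 : HasDerivAt χ (deriv χ a) a := ((hχ.differentiable (by simp)) a).hasDerivAt
  have h5 : HasDerivAt (fun b : ℝ => b ^ β) (β * a ^ (β - 1)) a :=
    Real.hasDerivAt_rpow_const (Or.inl (ne_of_gt ha))
  have h : HasDerivAt (fun b => φ (x * b ^ (-r)) * χ b * b ^ β) _ a := (h3.mul h4).mul h5
  convert h using 1
  simp only [Pi.mul_apply]
  ring

lemma hasDerivAt_x (r : ℝ) {φ : ℝ → ℝ} (hφ : ContDiff ℝ (⊤ : ℕ∞) φ) (c m x : ℝ) :
    HasDerivAt (fun y => φ (y * c) * m) (deriv φ (x * c) * c * m) x := by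
  have h1 : HasDerivAt (fun y : ℝ => y * c) c x := by
    simpa using (hasDerivAt_id x).mul_const c
  have hφ' : HasDerivAt φ (deriv φ (x * c)) (x * c) :=
    ((hφ.differentiable (by simp)) _).hasDerivAt
  exact (hφ'.comp x h1).mul_const m

lemma key_identity (r : ℝ) (φ χ : ℝ → ℝ) (dχθ : ℝ) (β x a : ℝ) (ha : 0 < a) :
    a * (deriv φ (x * a ^ (-r)) * (x * (-r * a ^ (-r - 1))) * χ a * a ^ β
        + φ (x * a ^ (-r)) * dχθ * a ^ β
        + φ (x * a ^ (-r)) * χ a * (β * a ^ (β - 1)))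
      = (β * φ (x * a ^ (-r)) - r * (x * a ^ (-r)) * deriv φ (x * a ^ (-r))) * χ a * a ^ β
        + φ (x * a ^ (-r)) * dχθ * a ^ (β + 1) := by
  have e1 : a ^ (-r - 1 : ℝ) = a ^ (-r) * a⁻¹ := by
    rw [show (-r - 1 : ℝ) = -r + (-1) by ring, Real.rpow_add ha, Real.rpow_neg_one]
  have e2 : a ^ (β + 1 : ℝ) = a ^ β * a := by
    rw [Real.rpow_add ha, Real.rpow_one]
  have e3 : a ^ (β - 1 : ℝ) = a ^ β * a⁻¹ := by
    rw [show (β - 1 : ℝ) = β + (-1) by ring, Real.rpow_add ha, Real.rpow_neg_one]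
  rw [e1, e2, e3]
  field_simp
  ring

lemma key_identity_x (r : ℝ) (φ : ℝ → ℝ) (χa β x a : ℝ) (ha : 0 < a) :
    a * (deriv φ (x * a ^ (-r)) * a ^ (-r) * (χa * a ^ β))
      = deriv φ (x * a ^ (-r)) * χa * a ^ (β + (1 - r)) := by
  have e : a ^ (β + (1 - r) : ℝ) = a ^ β * (a * a ^ (-r)) := by
    rw [show (β + (1 - r) : ℝ) = β + 1 + (-r) by ring, Real.rpow_add ha, Real.rpow_add ha,
      Real.rpow_one]
    ring
  rw [e]; ring


end AxBAux


open AxBAux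
theorem derivative_structure_axb
    (r γ : ℝ) (hr : 0 < r) (hγ : 0 < γ) (k₀ k₁ : ℕ)
    (ψ χ : ℝ → ℝ)
    (hψ : ContDiff ℝ (⊤ : ℕ∞) ψ) (hψ0 : ∀ t, 0 ≤ ψ t)
    (hψsupp : tsupport ψ ⊆ Set.Ioo 0 1)
    (hψ1 : ∀ t ∈ Set.Icc (1/4 : ℝ) (3/4), ψ t = 1)
    (hχ : ContDiff ℝ (⊤ : ℕ∞) χ) (hχ0 : ∀ t, 0 ≤ χ t)
    (hχsupp : tsupport χ ⊆ Set.Ioo (-1 : ℝ) 1)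
    (hχ1 : ∀ t ∈ Set.Icc (0 : ℝ) (1/2), χ t = 1)
    (g : ℝ → ℝ → ℝ)
    (hg : ∀ x a, g x a = ψ (x * a ^ (-r)) * χ a * a ^ (-γ)) :
    ∃ (ψt : ℝ → ℝ) (Ψt : ℝ → ℝ → ℝ),
      ContDiff ℝ (⊤ : ℕ∞) ψt ∧ tsupport ψt ⊆ Set.Ioo 0 1 ∧
      ContDiffOn ℝ (⊤ : ℕ∞) (fun q : ℝ × ℝ => Ψt q.1 q.2) (Set.univ ×ˢ Set.Ioi 0) ∧
      IsCompact (tsupport (fun q : ℝ × ℝ => Ψt q.1 q.2)) ∧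
      tsupport (fun q : ℝ × ℝ => Ψt q.1 q.2) ⊆ Set.univ ×ˢ Set.Ioi 0 ∧
      ∀ x : ℝ, ∀ a ∈ Set.Ioi (0 : ℝ),
        (X0^[k₀] (X1^[k₁] g)) x a
          = ψt (x * a ^ (-r)) * χ a * a ^ ((k₁ : ℝ) * (1 - r) - γ) + Ψt x a := by
  -- Step 1: iterated X1 derivatives
  have claim1 : ∀ k : ℕ, ∃ φ : ℝ → ℝ, ContDiff ℝ (⊤ : ℕ∞) φ ∧ tsupport φ ⊆ Set.Ioo 0 1 ∧
      ∀ x a : ℝ, 0 < a →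
        (X1^[k] g) x a = φ (x * a ^ (-r)) * χ a * a ^ ((k : ℝ) * (1 - r) - γ) := by
    intro k
    induction k with
    | zero =>
      refine ⟨ψ, hψ, hψsupp, ?_⟩
      intro x a ha
      simp only [Function.iterate_zero, id_eq, hg]
      norm_num
    | succ k ih =>
      obtain ⟨φ, hφ, hφsupp, heq⟩ := ih
      have hφ' : ContDiff ℝ (⊤ : ℕ∞) (deriv φ) := by
        have := (contDiff_infty_iff_deriv.1 (by exact_mod_cast hφ)).2
        exact_mod_cast this
      have hφ'supp : tsupport (deriv φ) ⊆ Set.Ioo 0 1 :=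
        (closure_minimal support_deriv_subset (isClosed_tsupport φ)).trans hφsupp
      refine ⟨deriv φ, hφ', hφ'supp, ?_⟩
      intro x a ha
      rw [Function.iterate_succ_apply']
      have hfun : (fun y => (X1^[k] g) y a) =
          (fun y => φ (y * a ^ (-r)) * (χ a * a ^ ((k : ℝ) * (1 - r) - γ))) := by
        funext y
        rw [heq y a ha, mul_assoc]
      show a * deriv (fun y => (X1^[k] g) y a) x = _
      rw [hfun, (hasDerivAt_x r hφ (a ^ (-r)) (χ a * a ^ ((k : ℝ) * (1 - r) - γ)) x).deriv]
      have := key_identity_x r φ (χ a) ((k : ℝ) * (1 - r) - γ) x a ha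
      rw [show deriv φ (x * a ^ (-r)) * a ^ (-r) * (χ a * a ^ ((k:ℝ) * (1 - r) - γ))
          = deriv φ (x * a ^ (-r)) * a ^ (-r) * (χ a * a ^ ((k:ℝ) * (1 - r) - γ)) from rfl]
      rw [mul_comm (deriv φ (x * a ^ (-r)) * a ^ (-r)) (χ a * a ^ ((k:ℝ) * (1 - r) - γ))] at this
      rw [mul_comm (deriv φ (x * a ^ (-r)) * a ^ (-r)) (χ a * a ^ ((k:ℝ) * (1 - r) - γ))]
      rw [this]
      congr 1
      push_cast
      ring
  -- Step 2: iterated X0 derivatives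
  set β : ℝ := (k₁ : ℝ) * (1 - r) - γ with hβ
  obtain ⟨φ₀, hφ₀, hφ₀supp, heq₀⟩ := claim1 k₁
  have claim2 : ∀ k : ℕ, ∃ (φ : ℝ → ℝ) (Ψ : ℝ → ℝ → ℝ),
      ContDiff ℝ (⊤ : ℕ∞) φ ∧ tsupport φ ⊆ Set.Ioo 0 1 ∧ Good Ψ ∧
      ∀ x a : ℝ, 0 < a →
        (X0^[k] (X1^[k₁] g)) x a = φ (x * a ^ (-r)) * χ a * a ^ β + Ψ x a := by
    intro k
    induction k with
    | zero =>
      refine ⟨φ₀, (fun _ _ => 0), hφ₀, hφ₀supp, good_zero, ?_⟩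
      intro x a ha
      simp only [Function.iterate_zero, id_eq, add_zero]
      exact heq₀ x a ha
    | succ k ih =>
      obtain ⟨φ, Ψ, hφ, hφsupp, hΨ, heq⟩ := ih
      have hdφ : ContDiff ℝ (⊤ : ℕ∞) (deriv φ) := by
        have := (contDiff_infty_iff_deriv.1 (by exact_mod_cast hφ)).2
        exact_mod_cast this
      set φ' : ℝ → ℝ := fun u => β * φ u - r * u * deriv φ u with hφ'def
      have hφ' : ContDiff ℝ (⊤ : ℕ∞) φ' :=
        (contDiff_const.mul hφ).sub ((contDiff_const.mul contDiff_id).mul hdφ)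
      have hφ'supp : tsupport φ' ⊆ Set.Ioo 0 1 := by
        refine (closure_minimal ?_ (isClosed_tsupport φ)).trans hφsupp
        intro u hu
        by_contra hmem
        apply hu
        have h1 : φ u = 0 := image_eq_zero_of_notMem_tsupport hmem
        have h2 : deriv φ u = 0 := by
          by_contra h
          exact hmem (support_deriv_subset (Function.mem_support.2 h))
        simp [hφ'def, h1, h2]
      set Ψ' : ℝ → ℝ → ℝ := fun x a => R r χ φ β x a + D2 Ψ x a with hΨ'def
      have hΨ' : Good Ψ' := good_add (good_R r hr hχ hχsupp hφ hφsupp β) (good_D2 hΨ)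
      refine ⟨φ', Ψ', hφ', hφ'supp, hΨ', ?_⟩
      intro x a ha
      rw [Function.iterate_succ_apply']
      show a * deriv (fun b => (X0^[k] (X1^[k₁] g)) x b) a = _
      have hev : (fun b => (X0^[k] (X1^[k₁] g)) x b) =ᶠ[nhds a]
          (fun b => φ (x * b ^ (-r)) * χ b * b ^ β + Ψ x b) := by
        filter_upwards [Ioi_mem_nhds ha] with b hb
        exact heq x b hb
      rw [hev.deriv_eq]
      have hd := (hasDerivAt_main r hφ hχ β x a ha).add (hasDerivAt_snd hΨ.1 x a)
      rw [(show HasDerivAt (fun b => φ (x * b ^ (-r)) * χ b * b ^ β + Ψ x b) _ a from hd).deriv]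
      rw [mul_add]
      rw [key_identity r φ χ (deriv χ a) β x a ha]
      have hθ : φ (x * a ^ (-r)) * deriv χ a * a ^ (β + 1) = R r χ φ β x a := by
        rw [R, deriv_χ_theta hχ1 ha]
      rw [hθ]
      show _ = φ' (x * a ^ (-r)) * χ a * a ^ β + (R r χ φ β x a + D2 Ψ x a)
      rw [hφ'def]
      show _ = (β * φ (x * a ^ (-r)) - r * (x * a ^ (-r)) * deriv φ (x * a ^ (-r))) * χ a * a ^ β
        + (R r χ φ β x a + D2 Ψ x a)
      rw [D2]
      ring
  obtain ⟨φ, Ψ, hφ, hφsupp, hΨ, heq⟩ := claim2 k₀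
  exact ⟨φ, Ψ, hφ, hφsupp, hΨ.1.contDiffOn, hΨ.2.1, hΨ.2.2,
    fun x a ha => heq x a ha⟩
end
end

section
/- Let p ∈ [1,∞), r > 0 and γ ≥ r/(2p). Then g² does not belong to L^p(ρ); more precisely, ∫₀^∞ ∫_ℝ |g(x,a)|^{2p} a^{-1} dx da = ∞. -/
open MeasureTheory Set

noncomputable section

theorem g_squared_not_in_Lp_axb
    (p r γ : ℝ) (hp : 1 ≤ p) (hr : 0 < r) (hγ : r / (2 * p) ≤ γ)
    (ψ χ : ℝ → ℝ)
    (hψ : ContDiff ℝ (⊤ : ℕ∞) ψ) (hψ0 : ∀ t, 0 ≤ ψ t)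
    (hψsupp : tsupport ψ ⊆ Set.Ioo 0 1)
    (hψ1 : ∀ t ∈ Set.Icc (1/4 : ℝ) (3/4), ψ t = 1)
    (hχ : ContDiff ℝ (⊤ : ℕ∞) χ) (hχ0 : ∀ t, 0 ≤ χ t)
    (hχsupp : tsupport χ ⊆ Set.Ioo (-1 : ℝ) 1)
    (hχ1 : ∀ t ∈ Set.Icc (0 : ℝ) (1/2), χ t = 1)
    (g : ℝ → ℝ → ℝ)
    (hg : ∀ x a, g x a = ψ (x * a ^ (-r)) * χ a * a ^ (-γ)) :
    (∫⁻ a in Set.Ioi (0 : ℝ), ∫⁻ x : ℝ,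
        ENNReal.ofReal (|g x a| ^ (2 * p) / a)) = ⊤ := by
  have hp0 : (0 : ℝ) < p := lt_of_lt_of_le one_pos hp
  set e : ℝ := r - 2 * p * γ - 1 with he
  have he1 : e ≤ -1 := by
    have h2p : (0 : ℝ) < 2 * p := by linarith
    have : r ≤ 2 * p * γ := by
      have := (div_le_iff₀ h2p).mp hγ
      linarith [this]
    linarith
  -- the divergent lower-bound integral
  have key : (∫⁻ a in Set.Ioo (0 : ℝ) (1/2), ENNReal.ofReal (a ^ e / 2)) = ⊤ := by
    by_contra h
    have hlt : (∫⁻ a in Set.Ioo (0 : ℝ) (1/2), ENNReal.ofReal (a ^ e / 2)) < ⊤ :=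
      lt_top_iff_ne_top.mpr h
    have hmeas : AEStronglyMeasurable (fun a : ℝ => a ^ e / 2)
        (volume.restrict (Set.Ioo (0 : ℝ) (1/2))) :=
      (by measurability : Measurable fun a : ℝ => a ^ e / 2).aestronglyMeasurable
    have hint : IntegrableOn (fun a : ℝ => a ^ e / 2) (Set.Ioo (0 : ℝ) (1/2)) := by
      refine ⟨hmeas, ?_⟩
      rw [hasFiniteIntegral_iff_norm]
      have : (∫⁻ a in Set.Ioo (0 : ℝ) (1/2), ENNReal.ofReal ‖a ^ e / 2‖)
          = ∫⁻ a in Set.Ioo (0 : ℝ) (1/2), ENNReal.ofReal (a ^ e / 2) := by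
        refine setLIntegral_congr_fun measurableSet_Ioo ?_
        intro a ha
        have : (0:ℝ) ≤ a ^ e / 2 :=
          div_nonneg (Real.rpow_nonneg ha.1.le _) (by norm_num)
        beta_reduce
        rw [Real.norm_of_nonneg this]
      rw [this]; exact hlt
    have hint2 : IntegrableOn (fun a : ℝ => a ^ e) (Set.Ioo (0 : ℝ) (1/2)) := by
      have h2 : IntegrableOn (fun a : ℝ => a ^ e / 2 * 2) (Set.Ioo (0 : ℝ) (1/2)) :=
        hint.mul_const (2 : ℝ)
      exact h2.congr_fun (fun a _ => by ring) measurableSet_Ioo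
    rw [intervalIntegral.integrableOn_Ioo_rpow_iff (by norm_num : (0:ℝ) < 1/2)] at hint2
    linarith
  rw [eq_top_iff, ← key]
  calc ∫⁻ a in Set.Ioo (0 : ℝ) (1/2), ENNReal.ofReal (a ^ e / 2)
      ≤ ∫⁻ a in Set.Ioo (0 : ℝ) (1/2), ∫⁻ x : ℝ,
          ENNReal.ofReal (|g x a| ^ (2 * p) / a) := by
        refine setLIntegral_mono' measurableSet_Ioo ?_
        intro a ha
        have ha0 : (0:ℝ) < a := ha.1
        have har : (0:ℝ) < a ^ r := Real.rpow_pos_of_pos ha0 r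
        -- on the interval [a^r/4, 3a^r/4] the integrand equals a constant
        have hconst : ∀ x ∈ Set.Icc (a ^ r / 4) (3 * a ^ r / 4),
            ENNReal.ofReal (|g x a| ^ (2 * p) / a)
              = ENNReal.ofReal (a ^ ((-γ) * (2 * p)) / a) := by
          intro x hx
          have hxq : x * a ^ (-r) ∈ Set.Icc (1/4 : ℝ) (3/4) := by
            rw [Real.rpow_neg ha0.le, ← div_eq_mul_inv]
            constructor
            · rw [le_div_iff₀ har]; linarith [hx.1]
            · rw [div_le_iff₀ har]; linarith [hx.2]
          have hψx : ψ (x * a ^ (-r)) = 1 := hψ1 _ hxq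
          have hχa : χ a = 1 := hχ1 a ⟨ha0.le, ha.2.le⟩
          have hgv : g x a = a ^ (-γ) := by rw [hg, hψx, hχa]; ring
          have hpos : (0:ℝ) < a ^ (-γ) := Real.rpow_pos_of_pos ha0 _
          rw [hgv, abs_of_pos hpos, Real.rpow_mul ha0.le]
        calc ENNReal.ofReal (a ^ e / 2)
            = ENNReal.ofReal (a ^ ((-γ) * (2 * p)) / a)
              * volume (Set.Icc (a ^ r / 4) (3 * a ^ r / 4)) := by
              rw [Real.volume_Icc, ← ENNReal.ofReal_mul
                (div_nonneg (Real.rpow_nonneg ha0.le _) ha0.le)]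
              congr 1
              have h1 : (3 * a ^ r / 4 - a ^ r / 4) = a ^ r / 2 := by ring
              rw [h1]
              have h2 : a ^ ((-γ) * (2 * p)) / a * (a ^ r / 2)
                  = a ^ ((-γ) * (2 * p)) * a ^ r / a / 2 := by ring
              rw [h2, ← Real.rpow_add ha0]
              have h3 : a ^ ((-γ) * (2 * p) + r) / a
                  = a ^ ((-γ) * (2 * p) + r - 1) := by
                rw [Real.rpow_sub_one ha0.ne']
              rw [h3]
              congr 2
              rw [he]; ring
          _ = ∫⁻ x in Set.Icc (a ^ r / 4) (3 * a ^ r / 4),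
                ENNReal.ofReal (|g x a| ^ (2 * p) / a) := by
              rw [setLIntegral_congr_fun measurableSet_Icc
                hconst, setLIntegral_const]
          _ ≤ ∫⁻ x : ℝ, ENNReal.ofReal (|g x a| ^ (2 * p) / a) :=
              setLIntegral_le_lintegral _ _
    _ ≤ ∫⁻ a in Set.Ioi (0 : ℝ), ∫⁻ x : ℝ,
          ENNReal.ofReal (|g x a| ^ (2 * p) / a) :=
        lintegral_mono' (Measure.restrict_mono
          (fun a ha => lt_trans ha.1 ha.2 |>.trans_le (le_of_eq rfl) |> (fun _ => ha.1)) le_rfl) le_rfl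
end
end

section
/- Let p ∈ (1,∞), 0 < r < 1 and 0 < γ < r/p. Then g, X₀ g and X₁ g all belong to L^p(ρ), but g is not essentially bounded with respect to ρ: its ρ-essential supremum is infinite. (This is the paper's example showing that the first-order Sobolev embedding into L^∞ fails at the endpoint on the ax+b group.) -/
open MeasureTheory Set

noncomputable section

/-- The right Haar measure `ρ` of the `ax+b` group, `dρ(x,a) = a⁻¹ dx da` on `ℝ × (0,∞)`. -/
def rhoMeasure : Measure (ℝ × ℝ) :=
  (((volume : Measure ℝ).prod
      ((volume : Measure ℝ).withDensity fun a => ENNReal.ofReal a⁻¹))).restrict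
    (Set.univ ×ˢ Set.Ioi 0)

lemma abs_mul3_le {x y z X Y Z : ℝ} (hx : |x| ≤ X) (hy : |y| ≤ Y) (hz : |z| ≤ Z) :
    |x * y * z| ≤ X * Y * Z := by
  have hX : 0 ≤ X := (abs_nonneg _).trans hx
  have hY : 0 ≤ Y := (abs_nonneg _).trans hy
  rw [abs_mul, abs_mul]
  exact mul_le_mul (mul_le_mul hx hy (abs_nonneg _) hX) hz (abs_nonneg _) (mul_nonneg hX hY)

lemma memLpRho_of_bound (p r t C : ℝ) (hp : 0 < p) (hC : 0 ≤ C)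
    (f : ℝ → ℝ → ℝ)
    (hsupp : ∀ a ∈ Set.Ioo (0:ℝ) 1, ∀ x, f x a ≠ 0 → x ∈ Set.Ioo 0 (a ^ r))
    (hbound : ∀ a ∈ Set.Ioo (0:ℝ) 1, ∀ x, |f x a| ≤ C * a ^ t)
    (hzero : ∀ a, (1:ℝ) ≤ a → ∀ x, f x a = 0)
    (hs : -1 < t * p + r - 1) :
    MemLpRho p f := by
  unfold MemLpRho
  set s : ℝ := t * p + r - 1 with hsdef
  have key : ∀ a ∈ Set.Ioi (0:ℝ),
      (∫⁻ x : ℝ, ENNReal.ofReal (|f x a| ^ p / a)) ≤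
        (Set.Ioo (0:ℝ) 1).indicator (fun a => ENNReal.ofReal (C ^ p * a ^ s)) a := by
    intro a ha
    have ha0 : (0:ℝ) < a := ha
    rcases lt_or_ge a 1 with ha1 | ha1
    · have haI : a ∈ Set.Ioo (0:ℝ) 1 := ⟨ha0, ha1⟩
      rw [Set.indicator_of_mem haI]
      calc (∫⁻ x : ℝ, ENNReal.ofReal (|f x a| ^ p / a))
          ≤ ∫⁻ x : ℝ, (Set.Ioo (0:ℝ) (a ^ r)).indicator
              (fun _ => ENNReal.ofReal (C ^ p * a ^ (t * p) / a)) x := by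
            apply lintegral_mono
            intro x
            by_cases hx : x ∈ Set.Ioo (0:ℝ) (a ^ r)
            · rw [Set.indicator_of_mem hx]
              apply ENNReal.ofReal_le_ofReal
              rw [div_le_div_iff_of_pos_right ha0]
              calc |f x a| ^ p ≤ (C * a ^ t) ^ p :=
                    Real.rpow_le_rpow (abs_nonneg _) (hbound a haI x) hp.le
                _ = C ^ p * a ^ (t * p) := by
                    rw [Real.mul_rpow hC (Real.rpow_nonneg ha0.le t),
                      ← Real.rpow_mul ha0.le]
            · have h0 : f x a = 0 := by
                by_contra h
                exact hx (hsupp a haI x h)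
              simp only [Set.indicator_of_notMem hx, h0, abs_zero,
                Real.zero_rpow (ne_of_gt hp), zero_div, ENNReal.ofReal_zero, le_refl]
        _ = ENNReal.ofReal (C ^ p * a ^ (t * p) / a) * volume (Set.Ioo (0:ℝ) (a ^ r)) := by
            rw [lintegral_indicator measurableSet_Ioo, setLIntegral_const]
        _ = ENNReal.ofReal (C ^ p * a ^ s) := by
            rw [Real.volume_Ioo, sub_zero, ← ENNReal.ofReal_mul (by positivity)]
            congr 1
            rw [hsdef, show t * p + r - 1 = t * p + r - 1 from rfl]
            rw [Real.rpow_sub ha0, Real.rpow_add ha0, Real.rpow_one]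
            ring
    · rw [show (∫⁻ x : ℝ, ENNReal.ofReal (|f x a| ^ p / a)) = 0 from ?_]
      · exact zero_le'
      · simp only [hzero a ha1]
        simp [Real.zero_rpow (ne_of_gt hp)]
  calc (∫⁻ a in Set.Ioi (0:ℝ), ∫⁻ x : ℝ, ENNReal.ofReal (|f x a| ^ p / a))
      ≤ ∫⁻ a in Set.Ioi (0:ℝ),
          (Set.Ioo (0:ℝ) 1).indicator (fun a => ENNReal.ofReal (C ^ p * a ^ s)) a :=
        setLIntegral_mono' measurableSet_Ioi key
    _ ≤ ∫⁻ a, (Set.Ioo (0:ℝ) 1).indicator (fun a => ENNReal.ofReal (C ^ p * a ^ s)) a :=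
        setLIntegral_le_lintegral _ _
    _ = ∫⁻ a in Set.Ioo (0:ℝ) 1, ENNReal.ofReal (C ^ p * a ^ s) :=
        lintegral_indicator measurableSet_Ioo _
    _ < ⊤ := by
        have hint : IntegrableOn (fun a : ℝ => C ^ p * a ^ s) (Set.Ioo 0 1) := by
          exact ((intervalIntegral.integrableOn_Ioo_rpow_iff one_pos).mpr hs).const_mul _
        exact hint.setLIntegral_lt_top

set_option maxHeartbeats 2000000 in
theorem sobolev_embedding_fails_axb
    (p r γ : ℝ) (hp1 : 1 < p) (hr0 : 0 < r) (hr1 : r < 1)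
    (hγ0 : 0 < γ) (hγ : γ < r / p)
    (ψ χ : ℝ → ℝ)
    (hψ : ContDiff ℝ (⊤ : ℕ∞) ψ) (hψ0 : ∀ t, 0 ≤ ψ t)
    (hψsupp : tsupport ψ ⊆ Set.Ioo 0 1)
    (hψ1 : ∀ t ∈ Set.Icc (1/4 : ℝ) (3/4), ψ t = 1)
    (hχ : ContDiff ℝ (⊤ : ℕ∞) χ) (hχ0 : ∀ t, 0 ≤ χ t)
    (hχsupp : tsupport χ ⊆ Set.Ioo (-1 : ℝ) 1)
    (hχ1 : ∀ t ∈ Set.Icc (0 : ℝ) (1/2), χ t = 1)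
    (g : ℝ → ℝ → ℝ)
    (hg : ∀ x a, g x a = ψ (x * a ^ (-r)) * χ a * a ^ (-γ)) :
    MemLpRho p g ∧ MemLpRho p (X0 g) ∧ MemLpRho p (X1 g) ∧
    essSup (fun q : ℝ × ℝ => ENNReal.ofReal |g q.1 q.2|) rhoMeasure = ⊤ := by
  have hp0 : (0:ℝ) < p := lt_trans one_pos hp1
  have hγp : γ * p < r := (lt_div_iff₀ hp0).mp hγ
  have hψd : Differentiable ℝ ψ := hψ.differentiable (by simp)
  have hχd : Differentiable ℝ χ := hχ.differentiable (by simp)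
  -- membership in support forces x ∈ Ioo 0 (a^r)
  have hmemx : ∀ a : ℝ, 0 < a → ∀ x : ℝ, x * a ^ (-r) ∈ tsupport ψ → x ∈ Set.Ioo 0 (a ^ r) := by
    intro a ha x hx
    have hu := hψsupp hx
    have har : (0:ℝ) < a ^ r := Real.rpow_pos_of_pos ha r
    have hxa : x = x * a ^ (-r) * a ^ r := by
      rw [mul_assoc, ← Real.rpow_add ha, neg_add_cancel, Real.rpow_zero, mul_one]
    constructor
    · rw [hxa]; exact mul_pos hu.1 har
    · rw [hxa]; nlinarith [hu.2]
  -- vanishing when a outside the support of χ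
  have hzeroχ : ∀ x a : ℝ, a ∉ tsupport χ → g x a = 0 ∧
      a * deriv (fun b => g x b) a = 0 ∧ a * deriv (fun y => g y a) x = 0 := by
    intro x a haχ
    have hga : ∀ y, g y a = 0 := fun y => by
      rw [hg, image_eq_zero_of_notMem_tsupport haχ, mul_zero, zero_mul]
    have hev : (fun b => g x b) =ᶠ[nhds a] (fun _ => 0) := by
      filter_upwards [(isClosed_tsupport χ).isOpen_compl.mem_nhds haχ] with b hb
      rw [hg, image_eq_zero_of_notMem_tsupport hb, mul_zero, zero_mul]
    refine ⟨hga x, ?_, ?_⟩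
    · rw [hev.deriv_eq]; simp
    · have h2 : (fun y => g y a) = (fun _ => 0) := funext hga
      rw [h2]; simp
  -- vanishing when x * a^(-r) outside the support of ψ
  have hzeroψ : ∀ x a : ℝ, 0 < a → x * a ^ (-r) ∉ tsupport ψ → g x a = 0 ∧
      a * deriv (fun b => g x b) a = 0 ∧ a * deriv (fun y => g y a) x = 0 := by
    intro x a ha hxψ
    have hopen := (isClosed_tsupport ψ).isOpen_compl
    refine ⟨by rw [hg, image_eq_zero_of_notMem_tsupport hxψ, zero_mul, zero_mul], ?_, ?_⟩
    · have hcont : ContinuousAt (fun b : ℝ => x * b ^ (-r)) a :=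
        continuousAt_const.mul (Real.continuousAt_rpow_const a (-r) (Or.inl ha.ne'))
      have hev : (fun b => g x b) =ᶠ[nhds a] (fun _ => 0) := by
        filter_upwards [hcont.eventually_mem (hopen.mem_nhds hxψ)] with b hb
        rw [hg, image_eq_zero_of_notMem_tsupport hb, zero_mul, zero_mul]
      rw [hev.deriv_eq]; simp
    · have hcont : ContinuousAt (fun y : ℝ => y * a ^ (-r)) x :=
        (continuous_id.mul continuous_const).continuousAt
      have hev : (fun y => g y a) =ᶠ[nhds x] (fun _ => 0) := by
        filter_upwards [hcont.eventually_mem (hopen.mem_nhds hxψ)] with y hy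
        rw [hg, image_eq_zero_of_notMem_tsupport hy, zero_mul, zero_mul]
      rw [hev.deriv_eq]; simp
  -- derivative formula in x
  have hX1 : ∀ x a : ℝ, deriv (fun y => g y a) x =
      deriv ψ (x * a ^ (-r)) * (1 * a ^ (-r)) * χ a * a ^ (-γ) := by
    intro x a
    have h1 : HasDerivAt (fun y : ℝ => y * a ^ (-r)) (1 * a ^ (-r)) x :=
      (hasDerivAt_id x).mul_const _
    have h2 : HasDerivAt (fun y : ℝ => ψ (y * a ^ (-r)))
        (deriv ψ (x * a ^ (-r)) * (1 * a ^ (-r))) x :=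
      ((hψd _).hasDerivAt).comp x h1
    have h3 := (h2.mul_const (χ a)).mul_const (a ^ (-γ))
    have hfun : (fun y => g y a) = (fun y => ψ (y * a ^ (-r)) * χ a * a ^ (-γ)) :=
      funext fun y => hg y a
    rw [hfun]
    exact h3.deriv
  -- derivative formula in a
  have hX0 : ∀ x a : ℝ, 0 < a → deriv (fun b => g x b) a =
      (deriv ψ (x * a ^ (-r)) * (x * (-r * a ^ (-r - 1))) * χ a
        + ψ (x * a ^ (-r)) * deriv χ a) * a ^ (-γ)
      + ψ (x * a ^ (-r)) * χ a * (-γ * a ^ (-γ - 1)) := by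
    intro x a ha
    have h1 : HasDerivAt (fun b : ℝ => b ^ (-r)) (-r * a ^ (-r - 1)) a :=
      Real.hasDerivAt_rpow_const (Or.inl ha.ne')
    have h2 : HasDerivAt (fun b : ℝ => x * b ^ (-r)) (x * (-r * a ^ (-r - 1))) a :=
      h1.const_mul x
    have h3 : HasDerivAt (fun b : ℝ => ψ (x * b ^ (-r)))
        (deriv ψ (x * a ^ (-r)) * (x * (-r * a ^ (-r - 1)))) a :=
      ((hψd _).hasDerivAt).comp a h2
    have h5 : HasDerivAt (fun b : ℝ => b ^ (-γ)) (-γ * a ^ (-γ - 1)) a :=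
      Real.hasDerivAt_rpow_const (Or.inl ha.ne')
    have h6 := (h3.mul ((hχd a).hasDerivAt)).mul h5
    have hfun : (fun b => g x b) = (fun b => ψ (x * b ^ (-r)) * χ b * b ^ (-γ)) :=
      funext fun b => hg x b
    rw [hfun]
    exact h6.deriv
  -- bounds
  have hψc : Continuous ψ := hψ.continuous
  have hψcs : HasCompactSupport ψ :=
    (isCompact_Icc (a := (0:ℝ)) (b := 1)).of_isClosed_subset (isClosed_tsupport ψ)
      (hψsupp.trans Set.Ioo_subset_Icc_self)
  have hχcs : HasCompactSupport χ :=
    (isCompact_Icc (a := (-1:ℝ)) (b := 1)).of_isClosed_subset (isClosed_tsupport χ)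
      (hχsupp.trans Set.Ioo_subset_Icc_self)
  obtain ⟨Cψ, hCψ⟩ := hψcs.exists_bound_of_continuous hψc
  obtain ⟨Cχ, hCχ⟩ := hχcs.exists_bound_of_continuous hχ.continuous
  obtain ⟨Cψ', hCψ'⟩ := hψcs.deriv.exists_bound_of_continuous (hψ.continuous_deriv (mod_cast le_top))
  obtain ⟨Cχ', hCχ'⟩ := hχcs.deriv.exists_bound_of_continuous (hχ.continuous_deriv (mod_cast le_top))
  simp only [Real.norm_eq_abs] at hCψ hCχ hCψ' hCχ'
  have hCψ0 : 0 ≤ Cψ := (abs_nonneg _).trans (hCψ 0)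
  have hCχ0 : 0 ≤ Cχ := (abs_nonneg _).trans (hCχ 0)
  have hCψ'0 : 0 ≤ Cψ' := (abs_nonneg _).trans (hCψ' 0)
  have hCχ'0 : 0 ≤ Cχ' := (abs_nonneg _).trans (hCχ' 0)
  -- bound for g
  have hgbound : ∀ a ∈ Set.Ioo (0:ℝ) 1, ∀ x, |g x a| ≤ Cψ * Cχ * a ^ (-γ) := by
    intro a ha x
    rw [hg]
    exact abs_mul3_le (hCψ _) (hCχ _) (le_of_eq (abs_of_pos (Real.rpow_pos_of_pos ha.1 _)))
  -- bound for X1 g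
  have hX1bound : ∀ a ∈ Set.Ioo (0:ℝ) 1, ∀ x,
      |a * deriv (fun y => g y a) x| ≤ Cψ' * Cχ * a ^ (1 - r - γ) := by
    intro a ha x
    have ha0 := ha.1
    have key : a * deriv (fun y => g y a) x =
        (deriv ψ (x * a ^ (-r)) * χ a) * (a * a ^ (-r) * a ^ (-γ)) := by
      rw [hX1 x a]; ring
    have hpow : a * a ^ (-r) * a ^ (-γ) = a ^ (1 - r - γ) := by
      rw [show (1:ℝ) - r - γ = 1 + -r + -γ by ring,
        Real.rpow_add ha0, Real.rpow_add ha0, Real.rpow_one]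
    rw [key, hpow, abs_mul, abs_of_pos (Real.rpow_pos_of_pos ha0 _)]
    apply mul_le_mul_of_nonneg_right _ (Real.rpow_pos_of_pos ha0 _).le
    rw [abs_mul]
    exact mul_le_mul (hCψ' _) (hCχ _) (abs_nonneg _) hCψ'0
  -- bound for X0 g
  set C0 : ℝ := r * Cψ' * Cχ + 1 * Cχ' * Cψ + γ * Cψ * Cχ with hC0def
  have hC00 : 0 ≤ C0 := by
    refine add_nonneg (add_nonneg ?_ ?_) ?_
    · exact mul_nonneg (mul_nonneg hr0.le hCψ'0) hCχ0
    · exact mul_nonneg (mul_nonneg zero_le_one hCχ'0) hCψ0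
    · exact mul_nonneg (mul_nonneg hγ0.le hCψ0) hCχ0
  have hX0bound : ∀ a ∈ Set.Ioo (0:ℝ) 1, ∀ x,
      |a * deriv (fun b => g x b) a| ≤ C0 * a ^ (-γ) := by
    intro a ha x
    have ha0 := ha.1
    by_cases hmem : x * a ^ (-r) ∈ tsupport ψ
    · have hu : x * a ^ (-r) ∈ Set.Ioo (0:ℝ) 1 := hψsupp hmem
      have hu1 : |x * a ^ (-r)| ≤ 1 := abs_le.mpr ⟨by linarith [hu.1], hu.2.le⟩
      have e1 : a ^ (-r - 1) = a ^ (-r) / a := by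
        rw [Real.rpow_sub ha0, Real.rpow_one]
      have e2 : a ^ (-γ - 1) = a ^ (-γ) / a := by
        rw [Real.rpow_sub ha0, Real.rpow_one]
      have key : a * deriv (fun b => g x b) a =
          (-r * (x * a ^ (-r)) * deriv ψ (x * a ^ (-r)) * χ a
            + a * deriv χ a * ψ (x * a ^ (-r))
            + -γ * ψ (x * a ^ (-r)) * χ a) * a ^ (-γ) := by
        rw [hX0 x a ha0, e1, e2]
        field_simp
      rw [key, abs_mul, abs_of_pos (Real.rpow_pos_of_pos ha0 _)]
      apply mul_le_mul_of_nonneg_right _ (Real.rpow_pos_of_pos ha0 _).le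
      refine (abs_add_three _ _ _).trans ?_
      refine add_le_add (add_le_add ?_ ?_) ?_
      · refine abs_mul3_le ?_ (hCψ' _) (hCχ _)
        rw [abs_mul, abs_neg, abs_of_pos hr0]
        exact mul_le_of_le_one_right hr0.le hu1
      · exact abs_mul3_le (by rw [abs_of_pos ha0]; exact ha.2.le) (hCχ' _) (hCψ _)
      · refine abs_mul3_le ?_ (hCψ _) (hCχ _)
        rw [abs_neg, abs_of_pos hγ0]
    · rw [(hzeroψ x a ha0 hmem).2.1, abs_zero]
      exact mul_nonneg hC00 (Real.rpow_pos_of_pos ha0 _).le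
  -- zero lemmas phrased for X0/X1
  have hzχ : ∀ x a : ℝ, (1:ℝ) ≤ a → g x a = 0 ∧ X0 g x a = 0 ∧ X1 g x a = 0 := by
    intro x a ha1
    have haχ : a ∉ tsupport χ := fun h => absurd (hχsupp h).2 (not_lt.mpr ha1)
    simpa [X0, X1] using hzeroχ x a haχ
  have hsuppg : ∀ (f : ℝ → ℝ → ℝ),
      (∀ x a, 0 < a → x * a ^ (-r) ∉ tsupport ψ → f x a = 0) →
      ∀ a ∈ Set.Ioo (0:ℝ) 1, ∀ x, f x a ≠ 0 → x ∈ Set.Ioo 0 (a ^ r) := by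
    intro f hf a ha x hne
    refine hmemx a ha.1 x ?_
    by_contra h
    exact hne (hf x a ha.1 h)
  refine ⟨?_, ?_, ?_, ?_⟩
  · refine memLpRho_of_bound p r (-γ) (Cψ * Cχ) hp0 (mul_nonneg hCψ0 hCχ0) g
      (hsuppg g (fun x a ha h => (hzeroψ x a ha h).1)) hgbound
      (fun a ha1 x => (hzχ x a ha1).1) (by linarith)
  · refine memLpRho_of_bound p r (-γ) C0 hp0 hC00 (X0 g)
      (hsuppg (X0 g) (fun x a ha h => by simpa [X0] using (hzeroψ x a ha h).2.1))
      (fun a ha x => by simpa [X0] using hX0bound a ha x)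
      (fun a ha1 x => (hzχ x a ha1).2.1) (by linarith)
  · refine memLpRho_of_bound p r (1 - r - γ) (Cψ' * Cχ) hp0 (mul_nonneg hCψ'0 hCχ0) (X1 g)
      (hsuppg (X1 g) (fun x a ha h => by simpa [X1] using (hzeroψ x a ha h).2.2))
      (fun a ha x => by simpa [X1] using hX1bound a ha x)
      (fun a ha1 x => (hzχ x a ha1).2.2)
      (by nlinarith [mul_pos hp0 (show (0:ℝ) < 1 - r by linarith)])
  · set F : ℝ × ℝ → ENNReal := fun q => ENNReal.ofReal |g q.1 q.2| with hF
    by_contra hne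
    have hlt : essSup F rhoMeasure < ⊤ := lt_top_iff_ne_top.mpr hne
    set M : ℝ := (essSup F rhoMeasure).toReal + 1 with hMdef
    have hM1 : (1:ℝ) ≤ M := by
      have := ENNReal.toReal_nonneg (a := essSup F rhoMeasure); linarith
    have hM0 : (0:ℝ) < M := by linarith
    have hMlt : essSup F rhoMeasure < ENNReal.ofReal M := by
      rw [hMdef, ENNReal.ofReal_add ENNReal.toReal_nonneg zero_le_one,
        ENNReal.ofReal_toReal hne, ENNReal.ofReal_one]
      exact ENNReal.lt_add_right hne one_ne_zero
    -- choose the rectangle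
    set T : ℝ := min (1/2) (M ^ (-1/γ)) with hTdef
    have hT0 : 0 < T := lt_min (by norm_num) (Real.rpow_pos_of_pos hM0 _)
    have hT2 : T ≤ 1/2 := min_le_left _ _
    have hTM : M ≤ T ^ (-γ) := by
      have h1 : (M ^ (-1/γ)) ^ (-γ) ≤ T ^ (-γ) :=
        Real.rpow_le_rpow_of_nonpos hT0 (min_le_right _ _) (by linarith)
      calc M = M ^ ((-1/γ) * (-γ)) := by
            rw [show (-1/γ) * (-γ) = 1 by field_simp, Real.rpow_one]
        _ = (M ^ (-1/γ)) ^ (-γ) := Real.rpow_mul hM0.le _ _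
        _ ≤ T ^ (-γ) := h1
    set c : ℝ := T * 2 ^ (-1/r) with hcdef
    set d : ℝ := T with hddef
    have hc0 : 0 < c := mul_pos hT0 (Real.rpow_pos_of_pos two_pos _)
    have hcd : c < d := by
      have h2 : (2:ℝ) ^ (-1/r) < 1 :=
        Real.rpow_lt_one_of_one_lt_of_neg one_lt_two (div_neg_of_neg_of_pos (by norm_num) hr0)
      nlinarith [Real.rpow_pos_of_pos (two_pos (α := ℝ)) (-1/r)]
    have hdc2 : d = c * 2 ^ (1/r) := by
      rw [hcdef, mul_assoc, ← Real.rpow_add two_pos, one_div, neg_div, one_div,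
        neg_add_cancel, Real.rpow_zero, mul_one]
    have hcr : (0:ℝ) < c ^ r := Real.rpow_pos_of_pos hc0 _
    set I : Set ℝ := Set.Ioo (c ^ r / 2) (c ^ r * (3/5)) with hIdef
    set J : Set ℝ := Set.Ioo c d with hJdef
    -- on I ×ˢ J, F ≥ ofReal M
    have hain : ∀ a ∈ J, ∀ x ∈ I, ENNReal.ofReal M ≤ F (x, a) := by
      intro a haJ x hxI
      have hca : c < a := haJ.1
      have ha0 : 0 < a := hc0.trans hca
      have har : (0:ℝ) < a ^ r := Real.rpow_pos_of_pos ha0 _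
      have hcar : c ^ r < a ^ r := Real.rpow_lt_rpow hc0.le hca hr0
      have har2 : a ^ r < 2 * c ^ r := by
        have : a ^ r < (c * 2 ^ (1/r)) ^ r := by
          rw [← hdc2]; exact Real.rpow_lt_rpow ha0.le haJ.2 hr0
        calc a ^ r < (c * 2 ^ (1/r)) ^ r := this
          _ = c ^ r * ((2:ℝ) ^ (1/r)) ^ r := Real.mul_rpow hc0.le (by positivity)
          _ = 2 * c ^ r := by
              rw [← Real.rpow_mul (by norm_num : (0:ℝ) ≤ 2), one_div,
                inv_mul_cancel₀ hr0.ne', Real.rpow_one, mul_comm]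
      have hu : x * a ^ (-r) = x / a ^ r := by
        rw [Real.rpow_neg ha0.le, div_eq_mul_inv]
      have h14 : (1/4 : ℝ) ≤ x * a ^ (-r) := by
        rw [hu, le_div_iff₀ har]
        nlinarith [hxI.1]
      have h34 : x * a ^ (-r) ≤ (3/4 : ℝ) := by
        rw [hu, div_le_iff₀ har]
        nlinarith [hxI.2]
      have hψu : ψ (x * a ^ (-r)) = 1 := hψ1 _ ⟨h14, h34⟩
      have hχa : χ a = 1 := hχ1 a ⟨ha0.le, by
        have : a < T := haJ.2
        linarith⟩
      have hga : g x a = a ^ (-γ) := by rw [hg, hψu, hχa, one_mul, one_mul]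
      have hMa : M ≤ a ^ (-γ) := by
        refine hTM.trans (Real.rpow_le_rpow_of_nonpos ha0 haJ.2.le (by linarith))
      rw [hF]
      simp only []
      rw [hga, abs_of_pos (Real.rpow_pos_of_pos ha0 _)]
      exact ENNReal.ofReal_le_ofReal hMa
    -- the rectangle has positive measure
    have hRpos : rhoMeasure (I ×ˢ J) ≠ 0 := by
      have hsub : I ×ˢ J ⊆ Set.univ ×ˢ Set.Ioi 0 :=
        Set.prod_mono (Set.subset_univ _) (fun a ha => hc0.trans ha.1)
      rw [rhoMeasure, Measure.restrict_apply (measurableSet_Ioo.prod measurableSet_Ioo),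
        Set.inter_eq_left.mpr hsub, Measure.prod_prod]
      apply mul_ne_zero
      · rw [hIdef, Real.volume_Ioo]
        simp only [ne_eq, ENNReal.ofReal_eq_zero, not_le]
        nlinarith
      · rw [withDensity_apply _ measurableSet_Ioo]
        have hlow : ENNReal.ofReal d⁻¹ * volume (Set.Ioo c d) ≤
            ∫⁻ a in Set.Ioo c d, ENNReal.ofReal a⁻¹ ∂volume := by
          rw [← setLIntegral_const]
          refine setLIntegral_mono (ENNReal.measurable_ofReal.comp measurable_inv) ?_
          intro b hb
          exact ENNReal.ofReal_le_ofReal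
            (inv_anti₀ (hc0.trans hb.1) hb.2.le)
        refine (lt_of_lt_of_le ?_ hlow).ne'
        refine ENNReal.mul_pos ?_ ?_
        · simp only [ne_eq, ENNReal.ofReal_eq_zero, not_le]
          exact inv_pos.mpr (hc0.trans hcd)
        · rw [Real.volume_Ioo]
          simp only [ne_eq, ENNReal.ofReal_eq_zero, not_le]
          linarith
    -- contradiction
    have hae := ae_lt_of_essSup_lt hMlt
    rw [Filter.eventually_iff, mem_ae_iff] at hae
    have : rhoMeasure (I ×ˢ J) = 0 := by
      refine measure_mono_null ?_ hae
      intro q hq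
      simp only [Set.mem_compl_iff, Set.mem_setOf_eq, not_lt]
      exact hain q.2 hq.2 q.1 hq.1
    exact hRpos this
end
end

section
/- Let β ∈ [0,1). There exists a constant C > 0, depending only on C_D and β, such that for every f ∈ L^1(μ) and every λ > 0, μ({x ∈ X : M^R_β f(x) > λ}) ≤ C · (λ^{-1} ‖f‖_{L^1(μ)})^{1/(1-β)}. That is, M^R_β is bounded from L^1(μ) to the weak space L^{1/(1-β),∞}(μ). -/
open MeasureTheory Metric ENNReal

noncomputable section

/-- The modified local Hardy–Littlewood maximal function with parameter `β`, taken over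
open balls of radius at most `R` containing the point:
`M^R_β f (x) = sup { μ(B)^{β-1} ∫_B |f| dμ : B ball of radius ≤ R, x ∈ B }`. -/
def locMaxFn {X : Type*} [MetricSpace X] [MeasurableSpace X] (μ : Measure X)
    (R β : ℝ) (f : X → ℝ) (x : X) : ℝ≥0∞ :=
  ⨆ (y : X) (s : ℝ) (_ : 0 < s ∧ s ≤ R ∧ x ∈ ball y s),
    μ (ball y s) ^ (β - 1) * ∫⁻ z in ball y s, ENNReal.ofReal |f z| ∂μ

lemma my_tsum_rpow_le {ι : Type*} (x : ι → ℝ≥0∞) {p : ℝ} (hp : 1 ≤ p) :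
    ∑' i, x i ^ p ≤ (∑' i, x i) ^ p := by
  set S := ∑' i, x i with hS
  rcases eq_or_ne S 0 with h0 | h0
  · have hx : ∀ i, x i = 0 := ENNReal.tsum_eq_zero.mp h0
    simp [hx, ENNReal.zero_rpow_of_pos (by linarith : (0:ℝ) < p)]
  rcases eq_or_ne S ∞ with htop | htop
  · rw [htop, ENNReal.top_rpow_of_pos (by linarith : (0:ℝ) < p)]; exact le_top
  calc ∑' i, x i ^ p ≤ ∑' i, x i * S ^ (p - 1) := by
        refine ENNReal.tsum_le_tsum fun i => ?_
        rcases eq_or_ne (x i) 0 with hxi0 | hxi0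
        · simp [hxi0, ENNReal.zero_rpow_of_pos (by linarith : (0:ℝ) < p)]
        · have hxiS : x i ≤ S := ENNReal.le_tsum i
          have hxit : x i ≠ ∞ := fun h => htop (top_le_iff.mp (h ▸ hxiS))
          calc x i ^ p = x i ^ ((1:ℝ) + (p - 1)) := by ring_nf
            _ = x i ^ (1:ℝ) * x i ^ (p - 1) := ENNReal.rpow_add _ _ hxi0 hxit
            _ ≤ x i * S ^ (p - 1) := by
                rw [ENNReal.rpow_one]
                exact mul_le_mul_right (ENNReal.rpow_le_rpow hxiS (by linarith)) _
    _ = S * S ^ (p - 1) := by rw [ENNReal.tsum_mul_right]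
    _ = S ^ (1:ℝ) * S ^ (p - 1) := by rw [ENNReal.rpow_one]
    _ = S ^ ((1:ℝ) + (p - 1)) := (ENNReal.rpow_add _ _ h0 htop).symm
    _ = S ^ p := by ring_nf

theorem weak_type_modified_local_maximal
    (β : ℝ) (hβ0 : 0 ≤ β) (hβ1 : β < 1) (C_D : ℝ) (hCD : 0 < C_D) :
    ∃ C : ℝ, 0 < C ∧
      ∀ (X : Type) [MetricSpace X] [MeasurableSpace X] [BorelSpace X]
        (μ : Measure X) (R : ℝ), 0 < R →
        (∀ (x : X) (t : ℝ), 0 < t → 0 < μ (ball x t) ∧ μ (ball x t) < ⊤) →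
        (∀ (y : X) (s : ℝ), 0 < s → s ≤ 4 * R →
          μ (ball y (2 * s)) ≤ ENNReal.ofReal C_D * μ (ball y s)) →
        ∀ f : X → ℝ, Integrable f μ → ∀ lam : ℝ, 0 < lam →
          μ {x | ENNReal.ofReal lam < locMaxFn μ R β f x}
            ≤ ENNReal.ofReal C *
                ENNReal.ofReal (lam⁻¹ * ∫ x, |f x| ∂μ) ^ (1 / (1 - β)) := by
  have hβ' : (0:ℝ) < 1 - β := by linarith
  set p := 1 / (1 - β) with hp
  have hp1 : 1 ≤ p := by rw [hp, le_div_iff₀ hβ']; linarith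
  have hp0 : (0:ℝ) < p := by linarith
  refine ⟨max (C_D ^ 3) 1, lt_of_lt_of_le one_pos (le_max_right _ _), ?_⟩
  intro X _ _ _ μ R hR hball hdouble f hf lam hlam
  -- the auxiliary measure ν = |f| dμ
  set g : X → ℝ≥0∞ := fun z => ENNReal.ofReal |f z| with hg
  have hgmeas : AEMeasurable g μ := (hf.abs.aemeasurable).ennreal_ofReal
  have hgfin : ∫⁻ z, g z ∂μ ≠ ∞ := by
    have h1 : ∀ z, g z = (‖f z‖₊ : ℝ≥0∞) := fun z => (Real.enorm_eq_ofReal_abs (f z)).symm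
    simp only [h1]
    exact hf.2.ne
  set ν : Measure X := μ.withDensity g with hν
  have hνfin : IsFiniteMeasure ν := isFiniteMeasure_withDensity hgfin
  have hνball : ∀ (y : X) (s : ℝ), ν (ball y s) = ∫⁻ z in ball y s, g z ∂μ :=
    fun y s => withDensity_apply g measurableSet_ball
  set E := {x | ENNReal.ofReal lam < locMaxFn μ R β f x} with hE
  -- selection of balls
  have hsel : ∀ x ∈ E, ∃ y : X, ∃ s : ℝ, (0 < s ∧ s ≤ R ∧ x ∈ ball y s) ∧
      ENNReal.ofReal lam < μ (ball y s) ^ (β - 1) * ν (ball y s) := by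
    intro x hx
    have hx' : ENNReal.ofReal lam < locMaxFn μ R β f x := hx
    rw [locMaxFn] at hx'
    simp only [lt_iSup_iff] at hx'
    obtain ⟨y, s, hc, hlt⟩ := hx'
    exact ⟨y, s, hc, by rw [hνball]; exact hlt⟩
  choose! y s hgeom hgt using hsel
  -- key per-ball estimate
  have hkey : ∀ x ∈ E, ν (ball (y x) (s x)) ≠ 0 ∧
      μ (ball (y x) (s x)) ≤ ((ENNReal.ofReal lam)⁻¹ * ν (ball (y x) (s x))) ^ p := by
    intro x hx
    obtain ⟨hs0, hsR, hmem⟩ := hgeom x hx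
    obtain ⟨hμ0, hμtop⟩ := hball (y x) (s x) hs0
    set a := μ (ball (y x) (s x)) with ha
    set I := ν (ball (y x) (s x)) with hI
    set c := a ^ (1 - β) with hc
    have hc0 : c ≠ 0 := (ENNReal.rpow_pos hμ0 hμtop.ne).ne'
    have hctop : c ≠ ∞ := (ENNReal.rpow_lt_top_of_nonneg (by linarith) hμtop.ne).ne
    have hlt : ENNReal.ofReal lam < c⁻¹ * I := by
      have : a ^ (β - 1) = c⁻¹ := by
        rw [hc, ← ENNReal.rpow_neg]; ring_nf
      rw [← this]
      exact hgt x hx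
    have hmul : ENNReal.ofReal lam * c < I := by
      have h2 : c * ENNReal.ofReal lam < c * (c⁻¹ * I) :=
        (ENNReal.mul_lt_mul_iff_right hc0 hctop).mpr hlt
      rw [← mul_assoc, ENNReal.mul_inv_cancel hc0 hctop, one_mul] at h2
      rw [mul_comm]; exact h2
    have hlam0 : ENNReal.ofReal lam ≠ 0 := (ENNReal.ofReal_pos.mpr hlam).ne'
    have hI0 : I ≠ 0 := by
      intro h
      rw [h] at hmul
      exact (not_lt_of_ge zero_le) hmul
    refine ⟨hI0, ?_⟩
    have hcle : c ≤ (ENNReal.ofReal lam)⁻¹ * I := by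
      have h3 : (ENNReal.ofReal lam)⁻¹ * (ENNReal.ofReal lam * c) ≤
          (ENNReal.ofReal lam)⁻¹ * I := mul_le_mul_right hmul.le _
      rwa [← mul_assoc, ENNReal.inv_mul_cancel hlam0 ENNReal.ofReal_ne_top, one_mul] at h3
    have hac : a = c ^ p := by
      rw [hc, ← ENNReal.rpow_mul]
      have : (1 - β) * p = 1 := by rw [hp]; field_simp
      rw [this, ENNReal.rpow_one]
    rw [hac]
    exact ENNReal.rpow_le_rpow hcle hp0.le
  -- Vitali covering
  obtain ⟨u, hut, hdisj, hcov⟩ :=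
    Vitali.exists_disjoint_subfamily_covering_enlargement_closedBall E y s R
      (fun x hx => (hgeom x hx).2.1) 4 (by norm_num)
  -- countability of u
  have hucount : u.Countable := by
    have hdisj' : Pairwise (Function.onFun Disjoint fun b : u => closedBall (y b) (s b)) := by
      intro b b' hbb'
      exact hdisj b.2 b'.2 (fun h => hbb' (Subtype.ext h))
    have hpos : ∀ b : u, 0 < ν (closedBall (y b) (s b)) := by
      intro b
      have h1 : ν (ball (y b) (s b)) ≠ 0 := (hkey b (hut b.2)).1
      exact lt_of_lt_of_le (pos_iff_ne_zero.mpr h1) (measure_mono ball_subset_closedBall)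
    have := Measure.countable_meas_pos_of_disjoint_iUnion (μ := ν)
      (As := fun b : u => closedBall (y b) (s b)) (fun b => measurableSet_closedBall) hdisj'
    have huniv : {b : u | 0 < ν (closedBall (y b) (s b))} = Set.univ := by
      ext b; simp [hpos b]
    rw [huniv, Set.countable_univ_iff] at this
    exact (Set.countable_coe_iff).mpr this
  -- covering of E by enlarged balls
  have hEsub : E ⊆ ⋃ b ∈ u, ball (y b) (8 * s b) := by
    intro x hx
    obtain ⟨b, hbu, hsub⟩ := hcov x hx
    have hs0b : 0 < s b := (hgeom b (hut hbu)).1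
    refine Set.mem_biUnion hbu ?_
    have h1 : x ∈ closedBall (y x) (s x) := ball_subset_closedBall (hgeom x hx).2.2
    have h2 := hsub h1
    have h3 : dist x (y b) ≤ 4 * s b := mem_closedBall.mp h2
    exact mem_ball.mpr (lt_of_le_of_lt h3 (by linarith))
  have step1 : μ E ≤ ∑' b : u, μ (ball (y b) (8 * s b)) :=
    le_trans (measure_mono hEsub) (measure_biUnion_le μ hucount _)
  have hdbl : ∀ x ∈ E, μ (ball (y x) (8 * s x)) ≤
      ENNReal.ofReal C_D ^ 3 * μ (ball (y x) (s x)) := by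
    intro x hx
    obtain ⟨hs0, hsR, -⟩ := hgeom x hx
    have h1 : μ (ball (y x) (2 * (4 * s x))) ≤ ENNReal.ofReal C_D * μ (ball (y x) (4 * s x)) :=
      hdouble _ _ (by linarith) (by linarith)
    have h2 : μ (ball (y x) (2 * (2 * s x))) ≤ ENNReal.ofReal C_D * μ (ball (y x) (2 * s x)) :=
      hdouble _ _ (by linarith) (by linarith)
    have h3 : μ (ball (y x) (2 * s x)) ≤ ENNReal.ofReal C_D * μ (ball (y x) (s x)) :=
      hdouble _ _ (by linarith) (by linarith)
    have e1 : (8 : ℝ) * s x = 2 * (4 * s x) := by ring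
    have e2 : (4 : ℝ) * s x = 2 * (2 * s x) := by ring
    calc μ (ball (y x) (8 * s x)) = μ (ball (y x) (2 * (4 * s x))) := by rw [e1]
      _ ≤ ENNReal.ofReal C_D * μ (ball (y x) (4 * s x)) := h1
      _ = ENNReal.ofReal C_D * μ (ball (y x) (2 * (2 * s x))) := by rw [e2]
      _ ≤ ENNReal.ofReal C_D * (ENNReal.ofReal C_D * μ (ball (y x) (2 * s x))) :=
          mul_le_mul_right h2 _
      _ ≤ ENNReal.ofReal C_D *
            (ENNReal.ofReal C_D * (ENNReal.ofReal C_D * μ (ball (y x) (s x)))) :=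
          mul_le_mul_right (mul_le_mul_right h3 _) _
      _ = ENNReal.ofReal C_D ^ 3 * μ (ball (y x) (s x)) := by ring
  set L := (ENNReal.ofReal lam)⁻¹ with hL
  have step2 : ∑' b : u, μ (ball (y b) (8 * s b)) ≤
      ENNReal.ofReal C_D ^ 3 * ∑' b : u, (L * ν (ball (y b) (s b))) ^ p := by
    rw [← ENNReal.tsum_mul_left]
    refine ENNReal.tsum_le_tsum fun b => ?_
    exact le_trans (hdbl b (hut b.2)) (mul_le_mul_right (hkey b (hut b.2)).2 _)
  have step3 : ∑' b : u, (L * ν (ball (y b) (s b))) ^ p ≤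
      (L * ∑' b : u, ν (ball (y b) (s b))) ^ p := by
    refine le_trans (my_tsum_rpow_le _ hp1) ?_
    rw [ENNReal.tsum_mul_left]
  have hballdisj : u.PairwiseDisjoint fun b => ball (y b) (s b) := by
    intro b hb b' hb' hbb'
    exact (hdisj hb hb' hbb').mono ball_subset_closedBall ball_subset_closedBall
  have step4 : ∑' b : u, ν (ball (y b) (s b)) ≤ ν Set.univ := by
    rw [← measure_biUnion hucount hballdisj (fun b _ => measurableSet_ball)]
    exact measure_mono (Set.subset_univ _)
  have hνuniv : ν Set.univ = ENNReal.ofReal (∫ x, |f x| ∂μ) := by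
    rw [hν, withDensity_apply g MeasurableSet.univ, Measure.restrict_univ]
    exact (ofReal_integral_eq_lintegral_ofReal hf.abs
      (Filter.Eventually.of_forall fun x => abs_nonneg _)).symm
  have hLν : L * ν Set.univ = ENNReal.ofReal (lam⁻¹ * ∫ x, |f x| ∂μ) := by
    rw [hνuniv, hL, ← ENNReal.ofReal_inv_of_pos hlam,
      ← ENNReal.ofReal_mul (inv_nonneg.mpr hlam.le)]
  calc μ E ≤ ∑' b : u, μ (ball (y b) (8 * s b)) := step1
    _ ≤ ENNReal.ofReal C_D ^ 3 * ∑' b : u, (L * ν (ball (y b) (s b))) ^ p := step2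
    _ ≤ ENNReal.ofReal C_D ^ 3 * (L * ∑' b : u, ν (ball (y b) (s b))) ^ p :=
        mul_le_mul_right step3 _
    _ ≤ ENNReal.ofReal C_D ^ 3 * (L * ν Set.univ) ^ p :=
        mul_le_mul_right (ENNReal.rpow_le_rpow (mul_le_mul_right step4 _) hp0.le) _
    _ = ENNReal.ofReal (C_D ^ 3) * ENNReal.ofReal (lam⁻¹ * ∫ x, |f x| ∂μ) ^ p := by
        rw [hLν, ENNReal.ofReal_pow hCD.le]
    _ ≤ ENNReal.ofReal (max (C_D ^ 3) 1) * ENNReal.ofReal (lam⁻¹ * ∫ x, |f x| ∂μ) ^ p :=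
        mul_le_mul_left (ENNReal.ofReal_le_ofReal (le_max_left _ _)) _
end
end

section
/- There exists a constant C > 0, depending only on C_D, such that for every locally integrable function f and every open ball B of radius t ∈ (0,1], for μ-almost every y ∈ B one has |f(y) - f_B| ≤ C ∫₀^{8t} Ω_f(y,s) s^{-1} ds. -/
open MeasureTheory Metric ENNReal

noncomputable section

/-- The local oscillation functional
`Ω_f(y,s) = sup { μ(B')⁻¹ ∫_{B'} |f - f_{B'}| dμ : B' ball of radius ≤ s, y ∈ B' }`. -/
def oscLoc {X : Type*} [MetricSpace X] [MeasurableSpace X] (μ : Measure X)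
    (f : X → ℝ) (y : X) (s : ℝ) : ℝ≥0∞ :=
  ⨆ (z : X) (t : ℝ) (_ : 0 < t ∧ t ≤ s ∧ y ∈ ball z t),
    (μ (ball z t))⁻¹ *
      ∫⁻ w in ball z t, ENNReal.ofReal |f w - ⨍ v in ball z t, f v ∂μ| ∂μ

lemma le_oscLoc {X : Type*} [MetricSpace X] [MeasurableSpace X] (μ : Measure X) (f : X → ℝ)
    {y z : X} {t s : ℝ} (ht : 0 < t) (hts : t ≤ s) (hy : y ∈ ball z t) :
    (μ (ball z t))⁻¹ * ∫⁻ w in ball z t, ENNReal.ofReal |f w - ⨍ v in ball z t, f v ∂μ| ∂μ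
      ≤ oscLoc μ f y s :=
  le_iSup_of_le z (le_iSup_of_le t (le_iSup_of_le ⟨ht, hts, hy⟩ le_rfl))

lemma oscLoc_mono {X : Type*} [MetricSpace X] [MeasurableSpace X] (μ : Measure X) (f : X → ℝ)
    (y : X) {s s' : ℝ} (h : s ≤ s') : oscLoc μ f y s ≤ oscLoc μ f y s' := by
  refine iSup_le fun z => iSup_le fun t => iSup_le fun ht => ?_
  exact le_iSup_of_le z (le_iSup_of_le t (le_iSup_of_le ⟨ht.1, ht.2.1.trans h, ht.2.2⟩ le_rfl))

lemma avg_key {X : Type} [MeasurableSpace X] (μ : Measure X) (f : X → ℝ) {A B : Set X}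
    (hAB : A ⊆ B) {K : ℝ≥0∞} (hK : μ B ≤ K * μ A) (hK0 : K ≠ 0) (hKt : K ≠ ⊤)
    (hA0 : μ A ≠ 0) (hBt : μ B ≠ ⊤) (hfB : IntegrableOn f B μ) :
    ENNReal.ofReal |(⨍ v in A, f v ∂μ) - ⨍ v in B, f v ∂μ|
      ≤ K * ((μ B)⁻¹ * ∫⁻ w in B, ENNReal.ofReal |f w - ⨍ v in B, f v ∂μ| ∂μ) := by
  set b := ⨍ v in B, f v ∂μ with hb
  have hAt : μ A ≠ ⊤ := ((measure_mono hAB).trans_lt hBt.lt_top).ne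
  have hApos : 0 < (μ A).toReal := ENNReal.toReal_pos hA0 hAt
  have hfA : IntegrableOn f A μ := hfB.mono_set hAB
  have hcA : IntegrableOn (fun _ => b) A μ :=
    integrableOn_const hAt
  have hgA : IntegrableOn (fun w => f w - b) A μ := hfA.sub hcA
  -- step 1 : average of difference
  have h1 : ⨍ v in A, (f v - b) ∂μ = (⨍ v in A, f v ∂μ) - b := by
    rw [setAverage_eq, setAverage_eq, integral_sub hfA hcA, setIntegral_const,
      smul_eq_mul, smul_eq_mul, smul_eq_mul, mul_sub, ← mul_assoc,
      inv_mul_cancel₀ (show μ.real A ≠ 0 from hApos.ne'), one_mul]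
  -- step 2 : |average| ≤ average of abs
  have h2 : |⨍ v in A, (f v - b) ∂μ| ≤ (μ A).toReal⁻¹ * ∫ v in A, |f v - b| ∂μ := by
    rw [setAverage_eq, smul_eq_mul, abs_mul, abs_of_nonneg (inv_nonneg.2 measureReal_nonneg), measureReal_def]
    gcongr
    have hn := norm_integral_le_integral_norm (μ := μ.restrict A) (fun v => f v - b)
    simpa [Real.norm_eq_abs] using hn
  have h3 : ENNReal.ofReal (∫ v in A, |f v - b| ∂μ)
      = ∫⁻ w in A, ENNReal.ofReal |f w - b| ∂μ :=
    ofReal_integral_eq_lintegral_ofReal hgA.abs (ae_of_all _ fun x => abs_nonneg _)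
  have h4 : ENNReal.ofReal ((μ A).toReal⁻¹) = (μ A)⁻¹ := by
    rw [ENNReal.ofReal_inv_of_pos hApos, ENNReal.ofReal_toReal hAt]
  have h5 : (μ A)⁻¹ ≤ K * (μ B)⁻¹ := by
    have hi : K⁻¹ * (μ A)⁻¹ ≤ (μ B)⁻¹ := by
      rw [← ENNReal.mul_inv (Or.inl hK0) (Or.inl hKt)]
      exact ENNReal.inv_le_inv' hK
    calc (μ A)⁻¹ = K * (K⁻¹ * (μ A)⁻¹) := by
          rw [← mul_assoc, ENNReal.mul_inv_cancel hK0 hKt, one_mul]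
      _ ≤ K * (μ B)⁻¹ := mul_le_mul_right hi K
  calc ENNReal.ofReal |(⨍ v in A, f v ∂μ) - b|
      = ENNReal.ofReal |⨍ v in A, (f v - b) ∂μ| := by rw [h1]
    _ ≤ ENNReal.ofReal ((μ A).toReal⁻¹ * ∫ v in A, |f v - b| ∂μ) :=
        ENNReal.ofReal_le_ofReal h2
    _ = (μ A)⁻¹ * ∫⁻ w in A, ENNReal.ofReal |f w - b| ∂μ := by
        rw [ENNReal.ofReal_mul (inv_nonneg.2 ENNReal.toReal_nonneg), h3, h4]
    _ ≤ (μ A)⁻¹ * ∫⁻ w in B, ENNReal.ofReal |f w - b| ∂μ :=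
        mul_le_mul_right (lintegral_mono_set hAB) _
    _ ≤ (K * (μ B)⁻¹) * ∫⁻ w in B, ENNReal.ofReal |f w - b| ∂μ :=
        mul_le_mul_left h5 _
    _ = K * ((μ B)⁻¹ * ∫⁻ w in B, ENNReal.ofReal |f w - b| ∂μ) := by rw [mul_assoc]

theorem pointwise_bound_by_oscillation (C_D : ℝ) (hCD : 0 < C_D) :
    ∃ C : ℝ, 0 < C ∧
      ∀ (X : Type) [MetricSpace X] [CompleteSpace X]
        [TopologicalSpace.SeparableSpace X] [MeasurableSpace X] [BorelSpace X]
        (μ : Measure X) [IsLocallyFiniteMeasure μ],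
        (∀ (x : X) (t : ℝ), 0 < t → 0 < μ (ball x t) ∧ μ (ball x t) < ⊤) →
        (∀ (y : X) (s : ℝ), 0 < s → s ≤ 16 →
          μ (ball y (2 * s)) ≤ ENNReal.ofReal C_D * μ (ball y s)) →
        ∀ f : X → ℝ, LocallyIntegrable f μ →
        ∀ (z : X) (t : ℝ), 0 < t → t ≤ 1 →
          ∀ᵐ y ∂(μ.restrict (ball z t)),
            ENNReal.ofReal |f y - ⨍ v in ball z t, f v ∂μ|
              ≤ ENNReal.ofReal C *
                  ∫⁻ s in Set.Ioo (0 : ℝ) (8 * t),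
                    oscLoc μ f y s * ENNReal.ofReal s⁻¹ := by
  classical
  set D := max C_D 1 with hDdef
  have hD1 : (1:ℝ) ≤ D := le_max_right _ _
  have hD0 : (0:ℝ) < D := lt_of_lt_of_le one_pos hD1
  have hD1' : (1:ℝ≥0∞) ≤ ENNReal.ofReal D := by
    rw [← ENNReal.ofReal_one]; exact ENNReal.ofReal_le_ofReal hD1
  refine ⟨8 * D ^ 3, by positivity, ?_⟩
  intro X _ _ _ _ _ μ _ hball hdbl f hf z t ht ht1
  haveI : SecondCountableTopology X := UniformSpace.secondCountable_of_separable X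
  have hD : ∀ (x : X) (s : ℝ), 0 < s → s ≤ 16 →
      μ (ball x (2 * s)) ≤ ENNReal.ofReal D * μ (ball x s) := fun x s hs hs16 =>
    (hdbl x s hs hs16).trans
      (mul_le_mul_left (ENNReal.ofReal_le_ofReal (le_max_left _ _)) _)
  haveI : IsUnifLocDoublingMeasure μ := by
    constructor
    refine ⟨D.toNNReal ^ 2, ?_⟩
    filter_upwards [Ioc_mem_nhdsGT
      (by norm_num : (0:ℝ) < 4)] with ε hε x
    obtain ⟨hε0, hε4⟩ := hε
    have h1 : μ (closedBall x (2 * ε)) ≤ μ (ball x (2 * (2 * ε))) :=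
      measure_mono (closedBall_subset_ball (by linarith))
    have h2 : μ (ball x (2 * (2 * ε))) ≤ ENNReal.ofReal D * μ (ball x (2 * ε)) :=
      hD x (2 * ε) (by linarith) (by linarith)
    have h3 : μ (ball x (2 * ε)) ≤ ENNReal.ofReal D * μ (ball x ε) := hD x ε hε0 (by linarith)
    have h4 : μ (ball x ε) ≤ μ (closedBall x ε) := measure_mono ball_subset_closedBall
    have hcoe : ((D.toNNReal ^ 2 : NNReal) : ℝ≥0∞)
        = ENNReal.ofReal D * ENNReal.ofReal D := by
      rw [ENNReal.coe_pow, sq]; rfl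
    calc μ (closedBall x (2 * ε)) ≤ ENNReal.ofReal D * μ (ball x (2 * ε)) := h1.trans h2
      _ ≤ ENNReal.ofReal D * (ENNReal.ofReal D * μ (ball x ε)) := mul_le_mul_right h3 _
      _ ≤ ENNReal.ofReal D * (ENNReal.ofReal D * μ (closedBall x ε)) := by
          exact mul_le_mul_right (mul_le_mul_right h4 _) _
      _ = ↑(D.toNNReal ^ 2) * μ (closedBall x ε) := by rw [hcoe, mul_assoc]
  have hdiff := IsUnifLocDoublingMeasure.ae_tendsto_average (μ := μ) hf 1
  filter_upwards [ae_restrict_of_ae hdiff, ae_restrict_mem measurableSet_ball] with y hy hyB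
  have hyz : dist y z < t := mem_ball.1 hyB
  set c0 := ⨍ v in ball z t, f v ∂μ with hc0
  set I := ∫⁻ s in Set.Ioo (0 : ℝ) (8 * t), oscLoc μ f y s * ENNReal.ofReal s⁻¹ with hI
  -- radii
  have h2k : ∀ k : ℕ, (0:ℝ) < 2 ^ k := fun k => pow_pos two_pos k
  set u : ℕ → ℝ := fun k => t / 2 ^ k with hu
  have hupos : ∀ k, 0 < u k := fun k => div_pos ht (h2k k)
  have hule : ∀ k, u k ≤ t := fun k =>
    div_le_self ht.le (one_le_pow₀ (by norm_num : (1:ℝ) ≤ 2))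
  have huhalf : ∀ k, 2 * u (k + 1) = u k := fun k => by
    simp only [hu, pow_succ]; field_simp
  have hu0 : u 0 = t := by simp [hu]
  by_cases hint : IntegrableOn f (ball y (4 * t)) μ
  · -- main case
    -- measure facts
    have hμball : ∀ r : ℝ, 0 < r → μ (ball y r) ≠ 0 ∧ μ (ball y r) ≠ ⊤ :=
      fun r hr => ⟨(hball y r hr).1.ne', (hball y r hr).2.ne⟩
    have hcBsub : ∀ k, closedBall y (2 * u k) ⊆ ball y (4 * u k) :=
      fun k => closedBall_subset_ball (by have := hupos k; linarith)
    have hμcB0 : ∀ k, μ (closedBall y (2 * u k)) ≠ 0 := fun k =>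
      fun h => (hμball (2 * u k) (by have := hupos k; linarith)).1
        (le_antisymm (h ▸ measure_mono ball_subset_closedBall) zero_le)
    have hOle : ∀ k, ball y (4 * u k) ⊆ ball y (4 * t) := fun k =>
      ball_subset_ball (by have := hule k; linarith)
    have hμOt : ∀ k, μ (ball y (4 * u k)) ≠ ⊤ := fun k =>
      (hμball (4 * u k) (by have := hupos k; linarith)).2
    -- doubling comparisons
    have hKpos : ∀ n : ℕ, ((ENNReal.ofReal D) ^ n ≠ 0 ∧ (ENNReal.ofReal D) ^ n ≠ ⊤) := fun n =>
      ⟨pow_ne_zero n (by simpa using (ENNReal.ofReal_pos.2 hD0).ne'),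
        pow_ne_top ENNReal.ofReal_ne_top⟩
    have hcomp1 : ∀ k, μ (ball y (4 * u k))
        ≤ (ENNReal.ofReal D) ^ 2 * μ (closedBall y (2 * u (k + 1))) := by
      intro k
      have hub : u k ≤ 1 := (hule k).trans ht1
      have e1 : μ (ball y (4 * u k)) ≤ ENNReal.ofReal D * μ (ball y (2 * u k)) := by
        have h := hD y (2 * u k) (by have := hupos k; linarith) (by linarith)
        rwa [show (2:ℝ) * (2 * u k) = 4 * u k by ring] at h
      have e2 : μ (ball y (2 * u k)) ≤ ENNReal.ofReal D * μ (ball y (u k)) :=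
        hD y (u k) (hupos k) (by linarith)
      have e3 : μ (ball y (u k)) ≤ μ (closedBall y (2 * u (k + 1))) := by
        rw [huhalf k]; exact measure_mono ball_subset_closedBall
      calc μ (ball y (4 * u k)) ≤ ENNReal.ofReal D * (ENNReal.ofReal D * μ (ball y (u k))) :=
            e1.trans (mul_le_mul_right e2 _)
        _ ≤ ENNReal.ofReal D * (ENNReal.ofReal D * μ (closedBall y (2 * u (k + 1)))) :=
            mul_le_mul_right (mul_le_mul_right e3 _) _
        _ = (ENNReal.ofReal D) ^ 2 * μ (closedBall y (2 * u (k + 1))) := by rw [sq, mul_assoc]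
    -- the averages
    set g : ℕ → ℝ := fun k => ⨍ v in closedBall y (2 * u k), f v ∂μ with hg
    -- Lebesgue differentiation
    have hδ : Filter.Tendsto (fun n : ℕ => 2 * u n) Filter.atTop (nhdsWithin 0 (Set.Ioi 0)) := by
      apply tendsto_nhdsWithin_of_tendsto_nhds_of_eventually_within
      · have h0 : Filter.Tendsto (fun n : ℕ => (2 * t) * (1 / 2 : ℝ) ^ n)
            Filter.atTop (nhds 0) := by
          simpa using (tendsto_pow_atTop_nhds_zero_of_lt_one (by norm_num : (0:ℝ) ≤ 1/2)
            (by norm_num : (1/2:ℝ) < 1)).const_mul (2 * t)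
        have : (fun n : ℕ => (2 * t) * (1 / 2 : ℝ) ^ n) = fun n : ℕ => 2 * u n := by
          funext n
          simp only [hu, one_div, inv_pow]
          field_simp
        rwa [this] at h0
      · exact Filter.Eventually.of_forall fun n => by
          have := hupos n; exact Set.mem_Ioi.2 (by linarith)
    have hmem : ∀ᶠ n : ℕ in Filter.atTop, y ∈ closedBall y (1 * (2 * u n)) :=
      Filter.Eventually.of_forall fun n => by
        have := hupos n
        exact mem_closedBall_self (by linarith)
    have hgt : Filter.Tendsto g Filter.atTop (nhds (f y)) := hy (fun _ => y) (fun n => 2 * u n) hδ hmem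
    -- per-step oscillation bounds
    have hintO : ∀ k, IntegrableOn f (ball y (4 * u k)) μ := fun k => hint.mono_set (hOle k)
    have hoscO : ∀ k, (μ (ball y (4 * u k)))⁻¹ *
        ∫⁻ w in ball y (4 * u k),
          ENNReal.ofReal |f w - ⨍ v in ball y (4 * u k), f v ∂μ| ∂μ
        ≤ oscLoc μ f y (4 * u k) := fun k =>
      le_oscLoc μ f (by have := hupos k; linarith) le_rfl
        (mem_ball_self (by have := hupos k; linarith))
    have hstep : ∀ k, ENNReal.ofReal |g (k + 1) - g k|
        ≤ 2 * ((ENNReal.ofReal D) ^ 2 * oscLoc μ f y (4 * u k)) := by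
      intro k
      have hcB1sub : closedBall y (2 * u (k + 1)) ⊆ ball y (4 * u k) := by
        rw [huhalf k]
        exact closedBall_subset_ball (by have := hupos k; linarith)
      have hA1 : ENNReal.ofReal |g (k + 1) - ⨍ v in ball y (4 * u k), f v ∂μ|
          ≤ (ENNReal.ofReal D) ^ 2 * oscLoc μ f y (4 * u k) := by
        have := avg_key μ f hcB1sub (hcomp1 k) (hKpos 2).1 (hKpos 2).2
          (hμcB0 (k + 1)) (hμOt k) (hintO k)
        exact this.trans (mul_le_mul_right (hoscO k) _)
      have hA2 : ENNReal.ofReal |g k - ⨍ v in ball y (4 * u k), f v ∂μ|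
          ≤ (ENNReal.ofReal D) ^ 2 * oscLoc μ f y (4 * u k) := by
        have hcmp : μ (ball y (4 * u k))
            ≤ (ENNReal.ofReal D) ^ 2 * μ (closedBall y (2 * u k)) := by
          refine (hcomp1 k).trans (mul_le_mul_right (measure_mono ?_) _)
          exact closedBall_subset_closedBall (by rw [huhalf k]; have := hupos k; linarith)
        have := avg_key μ f (hcBsub k) hcmp (hKpos 2).1 (hKpos 2).2
          (hμcB0 k) (hμOt k) (hintO k)
        exact this.trans (mul_le_mul_right (hoscO k) _)
      calc ENNReal.ofReal |g (k + 1) - g k|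
          ≤ ENNReal.ofReal (|g (k + 1) - ⨍ v in ball y (4 * u k), f v ∂μ|
              + |g k - ⨍ v in ball y (4 * u k), f v ∂μ|) := by
            apply ENNReal.ofReal_le_ofReal
            rw [abs_sub_comm (g k) _]
            exact abs_sub_le _ _ _
        _ = ENNReal.ofReal |g (k + 1) - ⨍ v in ball y (4 * u k), f v ∂μ|
              + ENNReal.ofReal |g k - ⨍ v in ball y (4 * u k), f v ∂μ| :=
            ENNReal.ofReal_add (abs_nonneg _) (abs_nonneg _)
        _ ≤ (ENNReal.ofReal D) ^ 2 * oscLoc μ f y (4 * u k)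
              + (ENNReal.ofReal D) ^ 2 * oscLoc μ f y (4 * u k) := add_le_add hA1 hA2
        _ = 2 * ((ENNReal.ofReal D) ^ 2 * oscLoc μ f y (4 * u k)) := (two_mul _).symm
    -- initial comparison
    have hinit : ENNReal.ofReal |c0 - g 0|
        ≤ 2 * ((ENNReal.ofReal D) ^ 3 * oscLoc μ f y (4 * u 0)) := by
      have hBsub : ball z t ⊆ ball y (4 * u 0) := by
        rw [hu0]
        apply ball_subset_ball'
        rw [dist_comm]
        linarith
      have hcomp0 : μ (ball y (4 * u 0)) ≤ (ENNReal.ofReal D) ^ 3 * μ (ball z t) := by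
        rw [hu0]
        have s1 : μ (ball y (4 * t)) ≤ μ (ball z (8 * t)) := by
          apply measure_mono (ball_subset_ball' ?_)
          linarith
        have e1 : μ (ball z (8 * t)) ≤ ENNReal.ofReal D * μ (ball z (4 * t)) := by
          have h := hD z (4 * t) (by linarith) (by linarith)
          rwa [show (2:ℝ) * (4 * t) = 8 * t by ring] at h
        have e2 : μ (ball z (4 * t)) ≤ ENNReal.ofReal D * μ (ball z (2 * t)) := by
          have h := hD z (2 * t) (by linarith) (by linarith)
          rwa [show (2:ℝ) * (2 * t) = 4 * t by ring] at h
        have e3 : μ (ball z (2 * t)) ≤ ENNReal.ofReal D * μ (ball z t) :=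
          hD z t ht (by linarith)
        calc μ (ball y (4 * t)) ≤ μ (ball z (8 * t)) := s1
          _ ≤ ENNReal.ofReal D * (ENNReal.ofReal D * (ENNReal.ofReal D * μ (ball z t))) :=
              e1.trans (mul_le_mul_right (e2.trans (mul_le_mul_right e3 _)) _)
          _ = (ENNReal.ofReal D) ^ 3 * μ (ball z t) := by ring
      have hcompcB : μ (ball y (4 * u 0)) ≤ (ENNReal.ofReal D) ^ 3 * μ (closedBall y (2 * u 0)) := by
        refine (hcomp1 0).trans (mul_le_mul' (pow_le_pow_right' hD1' (by norm_num))
          (measure_mono (closedBall_subset_closedBall ?_)))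
        have h01 := huhalf 0
        have := hupos 0
        linarith
      have hA1 : ENNReal.ofReal |c0 - ⨍ v in ball y (4 * u 0), f v ∂μ|
          ≤ (ENNReal.ofReal D) ^ 3 * oscLoc μ f y (4 * u 0) := by
        have := avg_key μ f hBsub hcomp0 (hKpos 3).1 (hKpos 3).2
          (hball z t ht).1.ne' (hμOt 0) (hintO 0)
        exact this.trans (mul_le_mul_right (hoscO 0) _)
      have hA2 : ENNReal.ofReal |g 0 - ⨍ v in ball y (4 * u 0), f v ∂μ|
          ≤ (ENNReal.ofReal D) ^ 3 * oscLoc μ f y (4 * u 0) := by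
        have := avg_key μ f (hcBsub 0) hcompcB (hKpos 3).1 (hKpos 3).2
          (hμcB0 0) (hμOt 0) (hintO 0)
        exact this.trans (mul_le_mul_right (hoscO 0) _)
      calc ENNReal.ofReal |c0 - g 0|
          ≤ ENNReal.ofReal (|c0 - ⨍ v in ball y (4 * u 0), f v ∂μ|
              + |g 0 - ⨍ v in ball y (4 * u 0), f v ∂μ|) := by
            apply ENNReal.ofReal_le_ofReal
            rw [abs_sub_comm (g 0) _]
            exact abs_sub_le _ _ _
        _ = ENNReal.ofReal |c0 - ⨍ v in ball y (4 * u 0), f v ∂μ|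
              + ENNReal.ofReal |g 0 - ⨍ v in ball y (4 * u 0), f v ∂μ| :=
            ENNReal.ofReal_add (abs_nonneg _) (abs_nonneg _)
        _ ≤ _ := by
            rw [two_mul]
            exact add_le_add hA1 hA2
    -- telescoping
    set T := ∑' k, oscLoc μ f y (4 * u k) with hT
    have htel : ENNReal.ofReal |f y - g 0|
        ≤ 2 * (ENNReal.ofReal D) ^ 2 * T := by
      have hS : ∑' k, ENNReal.ofReal |g (k + 1) - g k| ≤ 2 * (ENNReal.ofReal D) ^ 2 * T := by
        calc ∑' k, ENNReal.ofReal |g (k + 1) - g k|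
            ≤ ∑' k, 2 * (ENNReal.ofReal D) ^ 2 * oscLoc μ f y (4 * u k) := by
              refine ENNReal.tsum_le_tsum fun k => (hstep k).trans ?_
              rw [mul_assoc]
          _ = 2 * (ENNReal.ofReal D) ^ 2 * T := ENNReal.tsum_mul_left
      refine le_trans ?_ hS
      have hn : ∀ n, ENNReal.ofReal |g n - g 0| ≤ ∑' k, ENNReal.ofReal |g (k + 1) - g k| := by
        intro n
        have h1 : |g n - g 0| ≤ ∑ k ∈ Finset.range n, |g (k + 1) - g k| := by
          rw [← Finset.sum_range_sub g]
          exact Finset.abs_sum_le_sum_abs _ _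
        calc ENNReal.ofReal |g n - g 0|
            ≤ ENNReal.ofReal (∑ k ∈ Finset.range n, |g (k + 1) - g k|) :=
              ENNReal.ofReal_le_ofReal h1
          _ = ∑ k ∈ Finset.range n, ENNReal.ofReal |g (k + 1) - g k| :=
              ENNReal.ofReal_sum_of_nonneg fun _ _ => abs_nonneg _
          _ ≤ ∑' k, ENNReal.ofReal |g (k + 1) - g k| := ENNReal.sum_le_tsum _
      have hlim : Filter.Tendsto (fun n => ENNReal.ofReal |g n - g 0|) Filter.atTop
          (nhds (ENNReal.ofReal |f y - g 0|)) := by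
        apply (ENNReal.continuous_ofReal.tendsto _).comp
        exact ((hgt.sub tendsto_const_nhds).abs)
      exact le_of_tendsto' hlim hn
    -- combine LHS
    have hsum : ENNReal.ofReal |f y - c0| ≤ 4 * (ENNReal.ofReal D) ^ 3 * T := by
      have hT0 : oscLoc μ f y (4 * u 0) ≤ T := ENNReal.le_tsum 0
      have hpow : (ENNReal.ofReal D) ^ 2 ≤ (ENNReal.ofReal D) ^ 3 :=
        pow_le_pow_right' hD1' (by norm_num)
      calc ENNReal.ofReal |f y - c0|
          ≤ ENNReal.ofReal (|f y - g 0| + |g 0 - c0|) :=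
            ENNReal.ofReal_le_ofReal (abs_sub_le _ _ _)
        _ = ENNReal.ofReal |f y - g 0| + ENNReal.ofReal |g 0 - c0| :=
            ENNReal.ofReal_add (abs_nonneg _) (abs_nonneg _)
        _ ≤ 2 * (ENNReal.ofReal D) ^ 2 * T + 2 * ((ENNReal.ofReal D) ^ 3 * T) := by
            refine add_le_add htel ?_
            rw [abs_sub_comm]
            exact hinit.trans (mul_le_mul_right (mul_le_mul_right hT0 _) _)
        _ ≤ 2 * (ENNReal.ofReal D) ^ 3 * T + 2 * ((ENNReal.ofReal D) ^ 3 * T) :=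
            add_le_add (mul_le_mul_left (mul_le_mul_right hpow _) _) le_rfl
        _ = 4 * (ENNReal.ofReal D) ^ 3 * T := by ring
    -- lower bound for the integral
    have hIk : ∀ k, ENNReal.ofReal 2⁻¹ * oscLoc μ f y (4 * u k)
        ≤ ∫⁻ s in Set.Ioo (4 * u k) (8 * u k), oscLoc μ f y s * ENNReal.ofReal s⁻¹ := by
      intro k
      have hup := hupos k
      have hvol : volume (Set.Ioo (4 * u k) (8 * u k)) = ENNReal.ofReal (4 * u k) := by
        rw [Real.volume_Ioo]; congr 1; ring
      have harith : (8 * u k)⁻¹ * (4 * u k) = 2⁻¹ := by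
        field_simp
        ring
      calc ENNReal.ofReal 2⁻¹ * oscLoc μ f y (4 * u k)
          = (oscLoc μ f y (4 * u k) * ENNReal.ofReal (8 * u k)⁻¹)
              * volume (Set.Ioo (4 * u k) (8 * u k)) := by
            rw [hvol, mul_assoc, ← ENNReal.ofReal_mul (by positivity), harith, mul_comm]
        _ = ∫⁻ _ in Set.Ioo (4 * u k) (8 * u k),
              oscLoc μ f y (4 * u k) * ENNReal.ofReal (8 * u k)⁻¹ :=
            (setLIntegral_const _ _).symm
        _ ≤ ∫⁻ s in Set.Ioo (4 * u k) (8 * u k), oscLoc μ f y s * ENNReal.ofReal s⁻¹ := by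
            refine lintegral_mono_ae ((ae_restrict_iff' measurableSet_Ioo).2
              (Filter.Eventually.of_forall fun s hs => ?_))
            exact mul_le_mul' (oscLoc_mono μ f y hs.1.le)
              (ENNReal.ofReal_le_ofReal (inv_anti₀ (by linarith [hs.1, hupos k]) hs.2.le))
    have hdisj : Pairwise (Function.onFun Disjoint fun k : ℕ => Set.Ioo (4 * u k) (8 * u k)) := by
      have key : ∀ i j : ℕ, i < j → 8 * u j ≤ 4 * u i := by
        intro i j hij
        have h1 : u j ≤ u (i + 1) := by
          apply div_le_div_of_nonneg_left ht.le (h2k (i + 1))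
          exact pow_le_pow_right₀ (by norm_num) hij
        have h2 : 8 * u (i + 1) = 4 * u i := by
          have := huhalf i; linarith
        linarith [mul_le_mul_of_nonneg_left h1 (by norm_num : (0:ℝ) ≤ 8)]
      intro i j hij
      rcases hij.lt_or_gt with h | h
      · exact Set.Ioo_disjoint_Ioo.2 (le_trans (min_le_right _ _) ((key i j h).trans (le_max_left _ _)))
      · exact Set.Ioo_disjoint_Ioo.2 (le_trans (min_le_left _ _) ((key j i h).trans (le_max_right _ _)))
    have hcup : (⋃ k, Set.Ioo (4 * u k) (8 * u k)) ⊆ Set.Ioo (0:ℝ) (8 * t) :=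
      Set.iUnion_subset fun k => Set.Ioo_subset_Ioo
        (by have := hupos k; linarith) (by have := hule k; linarith)
    have hIlow : ENNReal.ofReal 2⁻¹ * T ≤ I := by
      calc ENNReal.ofReal 2⁻¹ * T = ∑' k, ENNReal.ofReal 2⁻¹ * oscLoc μ f y (4 * u k) :=
            ENNReal.tsum_mul_left.symm
        _ ≤ ∑' k, ∫⁻ s in Set.Ioo (4 * u k) (8 * u k),
              oscLoc μ f y s * ENNReal.ofReal s⁻¹ := ENNReal.tsum_le_tsum hIk
        _ = ∫⁻ s in ⋃ k, Set.Ioo (4 * u k) (8 * u k),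
              oscLoc μ f y s * ENNReal.ofReal s⁻¹ :=
            (lintegral_iUnion (fun _ => measurableSet_Ioo) hdisj _).symm
        _ ≤ I := lintegral_mono_set hcup
    -- final combination
    have hc : ENNReal.ofReal (8 * D ^ 3) * ENNReal.ofReal 2⁻¹ = 4 * (ENNReal.ofReal D) ^ 3 := by
      rw [← ENNReal.ofReal_mul (by positivity), show (8 * D ^ 3) * 2⁻¹ = 4 * D ^ 3 by ring,
        ENNReal.ofReal_mul (by norm_num), ENNReal.ofReal_pow hD0.le, ENNReal.ofReal_ofNat]
    calc ENNReal.ofReal |f y - c0| ≤ 4 * (ENNReal.ofReal D) ^ 3 * T := hsum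
      _ = ENNReal.ofReal (8 * D ^ 3) * (ENNReal.ofReal 2⁻¹ * T) := by
          rw [← mul_assoc, hc]
      _ ≤ ENNReal.ofReal (8 * D ^ 3) * I := mul_le_mul_right hIlow _
  · -- non-integrable case : right-hand side is infinite
    have hμB := hball y (4 * t) (by linarith)
    have htop : ∫⁻ w in ball y (4 * t),
        ENNReal.ofReal |f w - ⨍ v in ball y (4 * t), f v ∂μ| ∂μ = ⊤ := by
      by_contra hne
      apply hint
      set c := ⨍ v in ball y (4 * t), f v ∂μ with hc
      have hmeas : AEStronglyMeasurable f (μ.restrict (ball y (4 * t))) :=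
        hf.aestronglyMeasurable.restrict
      have hsub : Integrable (fun w => f w - c) (μ.restrict (ball y (4 * t))) := by
        refine ⟨hmeas.sub aestronglyMeasurable_const, ?_⟩
        rw [hasFiniteIntegral_iff_norm]
        simp only [Real.norm_eq_abs]
        exact lt_top_iff_ne_top.2 hne
      have h2 : Integrable (fun w => (f w - c) + c) (μ.restrict (ball y (4 * t))) :=
        hsub.add (integrableOn_const hμB.2.ne)
      simpa [IntegrableOn] using h2
    have hosc : ∀ s : ℝ, 4 * t ≤ s → oscLoc μ f y s = ⊤ := by
      intro s hs
      apply top_unique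
      have hle := le_oscLoc (y := y) (z := y) (t := 4 * t) (s := s) μ f (by linarith) hs
        (mem_ball_self (by linarith))
      rw [htop] at hle
      rwa [ENNReal.mul_top (ENNReal.inv_ne_zero.2 hμB.2.ne)] at hle
    have hIT : I = ⊤ := by
      apply top_unique
      have hsub : Set.Ioo (4 * t) (8 * t) ⊆ Set.Ioo (0:ℝ) (8 * t) :=
        Set.Ioo_subset_Ioo (by linarith) le_rfl
      calc (⊤:ℝ≥0∞) = ⊤ * volume (Set.Ioo (4 * t) (8 * t)) := by
            rw [ENNReal.top_mul]
            rw [Real.volume_Ioo]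
            simp only [ne_eq, ENNReal.ofReal_eq_zero, not_le]
            linarith
        _ = ∫⁻ _ in Set.Ioo (4 * t) (8 * t), (⊤:ℝ≥0∞) := (setLIntegral_const _ _).symm
        _ ≤ ∫⁻ s in Set.Ioo (4 * t) (8 * t), oscLoc μ f y s * ENNReal.ofReal s⁻¹ := by
            refine lintegral_mono_ae ((ae_restrict_iff' measurableSet_Ioo).2
              (Filter.Eventually.of_forall fun s hs => ?_))
            rw [hosc s hs.1.le, ENNReal.top_mul]
            exact (ENNReal.ofReal_pos.2 (inv_pos.2 (lt_trans (by linarith) hs.1))).ne'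
        _ ≤ I := lintegral_mono_set hsub
    rw [hIT, ENNReal.mul_top (by simp only [ne_eq, ENNReal.ofReal_eq_zero, not_le]; positivity)]
    exact le_top
end
end
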